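/- arXiv:1202.1786 — 5 statements merged into one kernel-verified Lean document; each statement's English description precedes it below -/
import Mathlib

section
/- Let K be a field and H a subgroup of the multiplicative group K^×. The following are equivalent: (1) there exists a valuation subring O of K whose unit group O^× is contained in H; (2) −1 ∈ H; for every x ∈ K^× with x ∉ H one has 1+x ∈ H ∪ xH; and whenever x, y ∈ K^× \ H satisfy 1+x ∈ H and 1+y ∈ H, one has 1+x(1+y) ∈ H. -/
namespace ValuativeAux

variable {K : Type*} [Field K]

/-- `a : K` is (the coercion of) an element of `H`. -/
def memH (H : Subgroup Kˣ) (a : K) : Prop := ∃ h : Kˣ, h ∈ H ∧ (h : K) = a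

lemma memH_ne_zero {H : Subgroup Kˣ} {a : K} (h : memH H a) : a ≠ 0 := by
  obtain ⟨u, -, rfl⟩ := h; exact u.ne_zero

lemma memH_unit {H : Subgroup Kˣ} {x : Kˣ} : memH H (x : K) ↔ x ∈ H := by
  constructor
  · rintro ⟨u, hu, he⟩; rwa [Units.ext he] at hu
  · intro hx; exact ⟨x, hx, rfl⟩

lemma memH_one {H : Subgroup Kˣ} : memH H (1 : K) := ⟨1, one_mem H, rfl⟩

lemma memH_mul {H : Subgroup Kˣ} {a b : K} (ha : memH H a) (hb : memH H b) :
    memH H (a * b) := by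
  obtain ⟨u, hu, rfl⟩ := ha; obtain ⟨v, hv, rfl⟩ := hb
  exact ⟨u * v, mul_mem hu hv, rfl⟩

lemma memH_inv {H : Subgroup Kˣ} {a : K} (ha : memH H a) : memH H a⁻¹ := by
  obtain ⟨u, hu, rfl⟩ := ha
  exact ⟨u⁻¹, inv_mem hu, by simp⟩

/-- `P a` : `a` is nonzero, not in `H`, and `1 + a ∈ H`.  (The "positive small" elements.) -/
def P (H : Subgroup Kˣ) (a : K) : Prop := a ≠ 0 ∧ ¬ memH H a ∧ memH H (1 + a)

section Axioms

variable {H : Subgroup Kˣ}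
variable (hneg : (-1 : Kˣ) ∈ H)
variable (hax2 : ∀ x : Kˣ, x ∉ H →
    (∃ h ∈ H, ((h : Kˣ) : K) = 1 + (x : K)) ∨
    (∃ h ∈ H, (x : K) * ((h : Kˣ) : K) = 1 + (x : K)))
variable (hax3 : ∀ x y : Kˣ, x ∉ H → y ∉ H →
    (∃ h ∈ H, ((h : Kˣ) : K) = 1 + (x : K)) →
    (∃ h ∈ H, ((h : Kˣ) : K) = 1 + (y : K)) →
    (∃ h ∈ H, ((h : Kˣ) : K) = 1 + (x : K) * (1 + (y : K))))

include hneg in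
lemma memH_neg {a : K} (ha : memH H a) : memH H (-a) := by
  have := memH_mul (⟨-1, hneg, by simp⟩ : memH H (-1 : K)) ha
  simpa using this

include hneg hax2 in
/-- Dichotomy coming from axiom 2 : a nonzero element not in `H` satisfies `P a` or `P a⁻¹`. -/
lemma pdich {a : K} (ha : a ≠ 0) (hm : ¬ memH H a) : P H a ∨ P H a⁻¹ := by
  have hx : Units.mk0 a ha ∉ H := fun h => hm (memH_unit.2 h)
  rcases hax2 _ hx with ⟨h, hh, he⟩ | ⟨h, hh, he⟩
  · exact Or.inl ⟨ha, hm, ⟨h, hh, he⟩⟩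
  · refine Or.inr ⟨inv_ne_zero ha, fun hmi => hm (by simpa using memH_inv hmi), ⟨h, hh, ?_⟩⟩
    simp only [Units.val_mk0] at he
    field_simp
    linear_combination he

lemma pn_false {a : K} (hp : P H a) (hq : P H a⁻¹) : False := by
  obtain ⟨ha, hm, h1⟩ := hp
  obtain ⟨-, -, h2⟩ := hq
  apply hm
  have h2' := memH_inv h2
  have hane : a ≠ 0 := ha
  have h2ne : (1 : K) + a⁻¹ ≠ 0 := memH_ne_zero h2
  have : a = (1 + a) * (1 + a⁻¹)⁻¹ := by
    rw [eq_mul_inv_iff_mul_eq₀ h2ne]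
    field_simp
    ring
  rw [this]
  exact memH_mul h1 h2'

include hax3 in
/-- The multiplicative form of axiom 3: `P a → P b → P (a * (1 + b))`. -/
lemma padd {a b : K} (hp : P H a) (hq : P H b) : P H (a * (1 + b)) := by
  obtain ⟨ha, hma, h1a⟩ := hp
  obtain ⟨hb, hmb, h1b⟩ := hq
  have hb1 : (1 : K) + b ≠ 0 := memH_ne_zero h1b
  have key := hax3 (Units.mk0 a ha) (Units.mk0 b hb)
    (fun h => hma (memH_unit.2 h)) (fun h => hmb (memH_unit.2 h))
    (by obtain ⟨u, hu, he⟩ := h1a; exact ⟨u, hu, by simp [he]⟩)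
    (by obtain ⟨u, hu, he⟩ := h1b; exact ⟨u, hu, by simp [he]⟩)
  simp only [Units.val_mk0] at key
  refine ⟨mul_ne_zero ha hb1, fun hm => hma ?_, key⟩
  have := memH_mul hm (memH_inv h1b)
  rwa [mul_assoc, mul_inv_cancel₀ hb1, mul_one] at this

include hneg hax2 hax3 in
lemma pneg {a : K} (hp : P H a) : P H (-a) := by
  by_contra hn
  have hm : ¬ memH H (-a) := fun h => hp.2.1 (by simpa using memH_neg hneg h)
  rcases pdich hneg hax2 (neg_ne_zero.2 hp.1) hm with h | h
  · exact hn h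
  · rw [show (-a)⁻¹ = -a⁻¹ by rw [inv_neg]] at h
    have := padd hax3 hp h
    have hval : a * (1 + -a⁻¹) = a - 1 := by
      rw [mul_add, mul_one, mul_neg, mul_inv_cancel₀ hp.1]
      ring
    obtain ⟨u, hu, hue⟩ := this.2.2
    apply hp.2.1
    exact ⟨u, hu, by rw [hue, hval]; ring⟩

lemma pone_false (h : P H 1) : False := h.2.1 memH_one

include hneg hax2 hax3 in
lemma psub {a b : K} (hp : P H a) (hq : P H b) : P H (a * (1 - b)) := by
  have := padd hax3 hp (pneg hneg hax2 hax3 hq)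
  rwa [show (1 : K) + -b = 1 - b by ring] at this

include hax3 in
/-- No product of three `P`-elements equals `1`. -/
lemma q3 {a b c : K} (hp : P H a) (hq : P H b) (hr : P H c)
    (h : a * b * c = 1) : False := by
  have hA := padd hax3 hp hq
  have hB := padd hax3 hp (padd hax3 hq hr)
  have key : a * (1 + b * (1 + c)) = 1 + a * (1 + b) := by ring_nf; linear_combination h
  apply hB.2.1
  rw [key]
  exact hA.2.2

include hax3 in
/-- No product of four `P`-elements equals `1`. -/
lemma q4 {a b c d : K} (hp : P H a) (hq : P H b) (hr : P H c) (hs : P H d)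
    (h : a * b * c * d = 1) : False := by
  have hA := padd hax3 hp (padd hax3 hq hr)
  have hB := padd hax3 hp (padd hax3 hq (padd hax3 hr hs))
  have key : a * (1 + b * (1 + c * (1 + d))) = 1 + a * (1 + b * (1 + c)) := by
    ring_nf; linear_combination h
  apply hB.2.1
  rw [key]
  exact hA.2.2

include hneg hax2 hax3 in
lemma ppp {a b : K} (hp : P H a) (hq : P H b) (hm : ¬ memH H (a * b)) : P H (a * b) := by
  rcases pdich hneg hax2 (mul_ne_zero hp.1 hq.1) hm with h | h
  · exact h
  · exact absurd (q3 hax3 h hp hq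
      (by rw [mul_assoc, inv_mul_cancel₀ (mul_ne_zero hp.1 hq.1)])) (fun h => h)

/-- `St a` : multiplication by `a` preserves `P`. -/
def St (H : Subgroup Kˣ) (a : K) : Prop := a ≠ 0 ∧ ∀ b, P H b → P H (a * b)

include hneg hax2 hax3 in
lemma pmulH {a b : K} (hp : P H a) (hq : P H b) (hm : memH H (a * b)) : St H (a * b) := by
  refine ⟨mul_ne_zero hp.1 hq.1, fun r hr => ?_⟩
  have hne : a * b * r ≠ 0 := mul_ne_zero (mul_ne_zero hp.1 hq.1) hr.1
  have hnm : ¬ memH H (a * b * r) := by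
    intro h
    apply hr.2.1
    have := memH_mul h (memH_inv hm)
    rwa [show a * b * r * (a*b)⁻¹ = r by
      rw [mul_comm (a * b) r, mul_assoc, mul_inv_cancel₀ (mul_ne_zero hp.1 hq.1), mul_one]]
      at this
  rcases pdich hneg hax2 hne hnm with h | h
  · exact h
  · exact absurd (q4 hax3 h hp hq hr
      (by rw [mul_assoc, mul_assoc, ← mul_assoc a b r, inv_mul_cancel₀ hne])) (fun h => h)

/-- The carrier of the valuation subring. -/
def Good (H : Subgroup Kˣ) (a : K) : Prop := P H a ∨ St H a

lemma good_ne_zero {a : K} (h : Good H a) : a ≠ 0 := h.elim (·.1) (·.1)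

lemma st_one : St H (1 : K) := ⟨one_ne_zero, fun b hb => by simpa using hb⟩

include hneg hax2 hax3 in
lemma good_mul {a b : K} (ha : Good H a) (hb : Good H b) : Good H (a * b) := by
  rcases ha with ha | ha <;> rcases hb with hb | hb
  · by_cases hm : memH H (a * b)
    · exact Or.inr (pmulH hneg hax2 hax3 ha hb hm)
    · exact Or.inl (ppp hneg hax2 hax3 ha hb hm)
  · exact Or.inl (by rw [mul_comm]; exact hb.2 a ha)
  · exact Or.inl (ha.2 b hb)
  · exact Or.inr ⟨mul_ne_zero ha.1 hb.1, fun r hr => by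
      rw [mul_assoc]; exact ha.2 _ (hb.2 r hr)⟩

include hneg hax2 hax3 in
lemma good_neg {a : K} (ha : Good H a) : Good H (-a) := by
  rcases ha with ha | ha
  · exact Or.inl (pneg hneg hax2 hax3 ha)
  · refine Or.inr ⟨neg_ne_zero.2 ha.1, fun r hr => ?_⟩
    rw [show -a * r = -(a * r) by ring]
    exact pneg hneg hax2 hax3 (ha.2 r hr)

include hneg hax2 hax3 in
/-- The main closure lemma: `Good` is closed under addition (away from `0`). -/
lemma good_add {a b : K} (ha : Good H a) (hb : Good H b) (hs : a + b ≠ 0) :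
    Good H (a + b) := by
  by_cases hm : memH H (a + b)
  · -- show `St (a+b)`
    refine Or.inr ⟨hs, fun r hr => ?_⟩
    have hne : (a + b) * r ≠ 0 := mul_ne_zero hs hr.1
    have hnm : ¬ memH H ((a + b) * r) := by
      intro h
      apply hr.2.1
      have := memH_mul h (memH_inv hm)
      rwa [show (a+b) * r * (a+b)⁻¹ = r by
        rw [mul_comm (a + b) r, mul_assoc, mul_inv_cancel₀ hs, mul_one]] at this
    rcases pdich hneg hax2 hne hnm with h | h
    · exact h
    · exfalso
      set c := ((a + b) * r)⁻¹ with hc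
      have key : c * r * a + c * r * b = 1 := by
        rw [hc]; field_simp; ring_nf; exact mul_inv_cancel₀ hr.1
      rcases ha with ha | ha <;> rcases hb with hb | hb
      · -- both P : CFG4b
        have hX := padd hax3 h (padd hax3 hr ha)
        have hX' := padd hax3 h (psub hneg hax2 hax3 hr hb)
        apply hX.2.1
        rw [show c * (1 + r * (1 + a)) = 1 + c * (1 + r * (1 - b)) by linear_combination key]
        exact hX'.2.2
      · -- P a, St b : CFG4a with z := a, w := b * r
        have hw : P H (b * r) := hb.2 r hr
        have hY := padd hax3 (padd hax3 h hw) (padd hax3 ha hr)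
        have hY' := padd hax3 h (padd hax3 ha (padd hax3 hw hr))
        apply hY.2.1
        rw [show c * (1 + b * r) * (1 + a * (1 + r))
              = 1 + c * (1 + a * (1 + b * r * (1 + r))) by linear_combination key]
        exact hY'.2.2
      · -- St a, P b : CFG4a with z := b, w := a * r
        have hw : P H (a * r) := ha.2 r hr
        have hY := padd hax3 (padd hax3 h hw) (padd hax3 hb hr)
        have hY' := padd hax3 h (padd hax3 hb (padd hax3 hw hr))
        apply hY.2.1
        rw [show c * (1 + a * r) * (1 + b * (1 + r))
              = 1 + c * (1 + b * (1 + a * r * (1 + r))) by linear_combination key]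
        exact hY'.2.2
      · -- both St : CFG3'
        have hX := padd hax3 h (hb.2 r hr)
        have hX' := psub hneg hax2 hax3 h (ha.2 r hr)
        apply hX.2.1
        rw [show c * (1 + b * r) = 1 + c * (1 - a * r) by linear_combination key]
        exact hX'.2.2
  · -- show `P (a+b)`
    rcases pdich hneg hax2 hs hm with h | h
    · exact Or.inl h
    · exfalso
      set c := (a + b)⁻¹ with hc
      have key : c * a + c * b = 1 := by rw [hc]; field_simp
      rcases ha with ha | ha <;> rcases hb with hb | hb
      · -- both P : CFG3'
        have hX := padd hax3 h hb
        have hX' := psub hneg hax2 hax3 h ha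
        apply hX.2.1
        rw [show c * (1 + b) = 1 + c * (1 - a) by linear_combination key]
        exact hX'.2.2
      · -- P a, St b : CFG2 with d := b * c
        have hd : P H (b * c) := hb.2 c h
        have hX := padd hax3 ha (psub hneg hax2 hax3 h ha)
        have hX' := psub hneg hax2 hax3 (pneg hneg hax2 hax3 hd) ha
        apply hX.2.1
        rw [show a * (1 + c * (1 - a)) = 1 + -(b * c) * (1 - a) by
          linear_combination (1 - a) * key]
        exact hX'.2.2
      · -- St a, P b : CFG2 with d := a * c
        have hd : P H (a * c) := ha.2 c h
        have hX := padd hax3 hb (psub hneg hax2 hax3 h hb)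
        have hX' := psub hneg hax2 hax3 (pneg hneg hax2 hax3 hd) hb
        apply hX.2.1
        rw [show b * (1 + c * (1 - b)) = 1 + -(a * c) * (1 - b) by
          linear_combination (1 - b) * key]
        exact hX'.2.2
      · -- both St
        have hX : P H (a * c) := ha.2 c h
        have hX' : P H (b * c) := hb.2 c h
        apply hX.2.1
        have := (pneg hneg hax2 hax3 hX').2.2
        rwa [show (1 : K) + -(b * c) = a * c by linear_combination -key] at this

include hneg hax2 hax3 in
lemma mem_or_inv {a : K} (ha : a ≠ 0) : Good H a ∨ Good H a⁻¹ := by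
  by_cases hm : memH H a
  · by_cases hSt : ∀ b, P H b → P H (a * b)
    · exact Or.inl (Or.inr ⟨ha, hSt⟩)
    · push_neg at hSt
      obtain ⟨b, hb, hnab⟩ := hSt
      refine Or.inr (Or.inr ⟨inv_ne_zero ha, fun r hr => ?_⟩)
      by_contra hn
      have hne : a⁻¹ * r ≠ 0 := mul_ne_zero (inv_ne_zero ha) hr.1
      have hnm : ¬ memH H (a⁻¹ * r) := by
        intro h
        apply hr.2.1
        have := memH_mul hm h
        rwa [show a * (a⁻¹ * r) = r by field_simp] at this
      rcases pdich hneg hax2 hne hnm with h | h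
      · exact hn h
      · have hnab' : ¬ memH H (a * b) := by
          intro h
          apply hb.2.1
          have := memH_mul (memH_inv hm) h
          rwa [show a⁻¹ * (a * b) = b by field_simp] at this
        rcases pdich hneg hax2 (mul_ne_zero ha hb.1) hnab' with h2 | h2
        · exact hnab h2
        · refine q4 hax3 h2 h hb hr ?_
          have hb0 : b ≠ 0 := hb.1
          have hr0 : r ≠ 0 := hr.1
          field_simp
  · rcases pdich hneg hax2 ha hm with h | h
    · exact Or.inl (Or.inl h)
    · exact Or.inr (Or.inl h)

/-- The valuation subring `{0} ∪ P ∪ St`. -/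
def O (H : Subgroup Kˣ) (hneg : (-1 : Kˣ) ∈ H)
    (hax2 : ∀ x : Kˣ, x ∉ H →
      (∃ h ∈ H, ((h : Kˣ) : K) = 1 + (x : K)) ∨
      (∃ h ∈ H, (x : K) * ((h : Kˣ) : K) = 1 + (x : K)))
    (hax3 : ∀ x y : Kˣ, x ∉ H → y ∉ H →
      (∃ h ∈ H, ((h : Kˣ) : K) = 1 + (x : K)) →
      (∃ h ∈ H, ((h : Kˣ) : K) = 1 + (y : K)) →
      (∃ h ∈ H, ((h : Kˣ) : K) = 1 + (x : K) * (1 + (y : K)))) : ValuationSubring K where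
  carrier := {a : K | a = 0 ∨ Good H a}
  zero_mem' := Or.inl rfl
  one_mem' := Or.inr (Or.inr st_one)
  add_mem' := by
    rintro a b (rfl | ha) (rfl | hb)
    · simp
    · simpa using Or.inr hb
    · simpa using Or.inr ha
    · by_cases hs : a + b = 0
      · exact Or.inl hs
      · exact Or.inr (good_add hneg hax2 hax3 ha hb hs)
  mul_mem' := by
    rintro a b (rfl | ha) (rfl | hb)
    · simp
    · simp
    · simp
    · exact Or.inr (good_mul hneg hax2 hax3 ha hb)
  neg_mem' := by
    rintro a (rfl | ha)
    · simp
    · exact Or.inr (good_neg hneg hax2 hax3 ha)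
  mem_or_inv_mem' := by
    intro a
    by_cases ha : a = 0
    · exact Or.inl (Or.inl ha)
    · rcases mem_or_inv hneg hax2 hax3 ha with h | h
      · exact Or.inl (Or.inr h)
      · exact Or.inr (Or.inr h)

include hneg hax2 hax3 in
lemma unitGroup_le :
    (O H hneg hax2 hax3).unitGroup ≤ H := by
  intro x hx
  have hxm : (x : K) ∈ O H hneg hax2 hax3 :=
    (O H hneg hax2 hax3).mem_of_valuation_le_one _
      (((O H hneg hax2 hax3).mem_unitGroup_iff x).1 hx).le
  have hxi : ((x⁻¹ : Kˣ) : K) ∈ O H hneg hax2 hax3 :=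
    (O H hneg hax2 hax3).mem_of_valuation_le_one _
      (((O H hneg hax2 hax3).mem_unitGroup_iff x⁻¹).1 (inv_mem hx)).le
  rw [show ((x⁻¹ : Kˣ) : K) = ((x : K))⁻¹ by simp] at hxi
  have ga : Good H (x : K) := by
    rcases hxm with h | h
    · exact absurd h x.ne_zero
    · exact h
  have gb : Good H ((x : K))⁻¹ := by
    rcases hxi with h | h
    · exact absurd h (inv_ne_zero x.ne_zero)
    · exact h
  by_contra hxH
  have hm : ¬ memH H (x : K) := fun h => hxH (memH_unit.1 h)
  rcases pdich hneg hax2 x.ne_zero hm with h | h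
  · rcases gb with h2 | h2
    · exact pn_false h h2
    · apply pone_false (H := H)
      have := h2.2 _ h
      rwa [inv_mul_cancel₀ x.ne_zero] at this
  · rcases ga with h2 | h2
    · exact pn_false h2 h
    · apply pone_false (H := H)
      have := h2.2 _ h
      rwa [mul_inv_cancel₀ x.ne_zero] at this

end Axioms

end ValuativeAux

/-- A subgroup `H ≤ K^×` contains the unit group of some valuation subring of `K`
iff it satisfies the arithmetic conditions of Lemma `valuative`. -/
theorem stmt_0 {K : Type*} [Field K] (H : Subgroup Kˣ) :
    (∃ O : ValuationSubring K, O.unitGroup ≤ H) ↔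
      ((-1 : Kˣ) ∈ H ∧
        (∀ x : Kˣ, x ∉ H →
          (∃ h ∈ H, ((h : Kˣ) : K) = 1 + (x : K)) ∨
          (∃ h ∈ H, (x : K) * ((h : Kˣ) : K) = 1 + (x : K))) ∧
        (∀ x y : Kˣ, x ∉ H → y ∉ H →
          (∃ h ∈ H, ((h : Kˣ) : K) = 1 + (x : K)) →
          (∃ h ∈ H, ((h : Kˣ) : K) = 1 + (y : K)) →
          (∃ h ∈ H, ((h : Kˣ) : K) = 1 + (x : K) * (1 + (y : K))))) := by
  constructor
  · rintro ⟨A, hA⟩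
    have hval : ∀ x : Kˣ, A.valuation (x : K) = 1 → x ∈ H := fun x hx =>
      hA ((A.mem_unitGroup_iff x).2 hx)
    have hvne : ∀ x : Kˣ, A.valuation (x : K) ≠ 0 := fun x => by
      simp [Valuation.ne_zero_iff, x.ne_zero]
    refine ⟨?_, ?_, ?_⟩
    · apply hval
      rw [show ((-1 : Kˣ) : K) = -(1 : K) by simp, Valuation.map_neg, Valuation.map_one]
    · intro x hx
      have hne1 : A.valuation (x : K) ≠ 1 := fun h => hx (hval x h)
      rcases lt_or_gt_of_ne hne1 with hlt | hgt
      · left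
        have h1 : A.valuation (1 + (x : K)) = 1 := A.valuation.map_one_add_of_lt hlt
        have hne : (1 : K) + (x : K) ≠ 0 := by
          intro h
          rw [h] at h1
          simp at h1
        refine ⟨Units.mk0 _ hne, hval _ ?_, rfl⟩
        simpa using h1
      · right
        have hilt : A.valuation ((x : K)⁻¹) < 1 := by
          rw [A.valuation.map_inv]
          exact (inv_lt_one₀ (zero_lt_iff.2 (hvne x))).2 hgt
        have h1 : A.valuation (1 + (x : K)⁻¹) = 1 := A.valuation.map_one_add_of_lt hilt
        have hne : (1 : K) + (x : K)⁻¹ ≠ 0 := by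
          intro h
          rw [h] at h1
          simp at h1
        refine ⟨Units.mk0 _ hne, hval _ ?_, ?_⟩
        · simpa using h1
        · simp only [Units.val_mk0]
          field_simp
          ring
    · intro x y hx hy ⟨h1, hh1, he1⟩ ⟨h2, hh2, he2⟩
      -- first: the valuation of x and y is < 1
      have hsmall : ∀ z : Kˣ, z ∉ H → ∀ hz : Kˣ, hz ∈ H → ((hz : Kˣ) : K) = 1 + (z : K) →
          A.valuation (z : K) < 1 := by
        intro z hz h hh he
        have hne1 : A.valuation (z : K) ≠ 1 := fun hc => hz (hval z hc)
        rcases lt_or_gt_of_ne hne1 with hlt | hgt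
        · exact hlt
        · exfalso
          have hilt : A.valuation ((z : K)⁻¹) < 1 := by
            rw [A.valuation.map_inv]
            exact (inv_lt_one₀ (zero_lt_iff.2 (hvne z))).2 hgt
          have h1 : A.valuation (1 + (z : K)⁻¹) = 1 := A.valuation.map_one_add_of_lt hilt
          have hne : (1 : K) + (z : K)⁻¹ ≠ 0 := by
            intro h
            rw [h] at h1
            simp at h1
          set u : Kˣ := Units.mk0 _ hne with hu
          have huH : u ∈ H := hval u (by rw [hu, Units.val_mk0]; exact h1)
          -- z * u = h
          have hzu : z * u = h := by
            apply Units.ext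
            rw [Units.val_mul, hu, Units.val_mk0, he, mul_add, mul_one, mul_inv_cancel₀ z.ne_zero,
              add_comm]
          apply hz
          have hz' : z = h * u⁻¹ := eq_mul_inv_of_mul_eq hzu
          rw [hz']
          exact mul_mem hh (inv_mem huH)
      have hxlt := hsmall x hx h1 hh1 he1
      have hylt := hsmall y hy h2 hh2 he2
      have hy1 : A.valuation (1 + (y : K)) = 1 := A.valuation.map_one_add_of_lt hylt
      have hprod : A.valuation ((x : K) * (1 + (y : K))) < 1 := by
        rw [Valuation.map_mul, hy1, mul_one]
        exact hxlt
      have h1 : A.valuation (1 + (x : K) * (1 + (y : K))) = 1 :=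
        A.valuation.map_one_add_of_lt hprod
      have hne : (1 : K) + (x : K) * (1 + (y : K)) ≠ 0 := by
        intro h
        rw [h] at h1
        simp at h1
      exact ⟨Units.mk0 _ hne, hval _ (by simpa using h1), rfl⟩
  · rintro ⟨hneg, hax2, hax3⟩
    exact ⟨ValuativeAux.O H hneg hax2 hax3, ValuativeAux.unitGroup_le hneg hax2 hax3⟩
end

section
/- Let K be a field and H a proper subgroup of K^× that is not valuative, i.e. no valuation subring of K has unit group contained in H. Let O₁ and O₂ be valuation subrings of K with maximal ideals m₁ and m₂ such that {1+a : a ∈ m₁} ⊆ H and {1+a : a ∈ m₂} ⊆ H. Then O₁ and O₂ are comparable: O₁ ⊆ O₂ or O₂ ⊆ O₁. -/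
/-- If `H ≤ K^×` is a proper subgroup which is not valuative, then any two
valuation subrings `O₁`, `O₂` of `K` with `1 + m_i ⊆ H` are comparable. -/
theorem stmt_2 {K : Type*} [Field K] (H : Subgroup Kˣ) (hne : H ≠ ⊤)
    (hnval : ¬ ∃ O : ValuationSubring K, O.unitGroup ≤ H)
    (O₁ O₂ : ValuationSubring K)
    (h1 : ∀ a : K, O₁.valuation a < 1 → ∃ h ∈ H, ((h : Kˣ) : K) = 1 + a)
    (h2 : ∀ a : K, O₂.valuation a < 1 → ∃ h ∈ H, ((h : Kˣ) : K) = 1 + a) :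
    O₁ ≤ O₂ ∨ O₂ ≤ O₁ := by
  by_contra hcon
  push_neg at hcon
  obtain ⟨h12, h21⟩ := hcon
  apply hnval
  obtain ⟨x, hx1, hx2⟩ := SetLike.not_le_iff_exists.mp h12
  obtain ⟨y, hy2, hy1⟩ := SetLike.not_le_iff_exists.mp h21
  -- key: any w with v₁ w < 1 and 1 < v₂ w is (realized by a unit) in H
  have key : ∀ w : K, O₁.valuation w < 1 → 1 < O₂.valuation w →
      ∃ h ∈ H, ((h : Kˣ) : K) = w := by
    intro w hw1 hw2
    have hw0 : w ≠ 0 := by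
      intro h; rw [h] at hw2; simp at hw2
    obtain ⟨h, hH, he⟩ := h1 w hw1
    have hwinv : O₂.valuation w⁻¹ < 1 := by
      rw [map_inv₀]
      have h0 : (0 : _) < O₂.valuation w :=
        zero_lt_iff.mpr ((Valuation.ne_zero_iff _).mpr hw0)
      exact (inv_lt_one₀ h0).mpr hw2
    obtain ⟨h', h'H, h'e⟩ := h2 w⁻¹ hwinv
    refine ⟨h'⁻¹ * h, H.mul_mem (H.inv_mem h'H) hH, ?_⟩
    have hne' : (1 : K) + w⁻¹ ≠ 0 := by rw [← h'e]; exact Units.ne_zero _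
    have hmul : (1 + w⁻¹) * w = 1 + w := by
      field_simp
      ring
    push_cast
    rw [h'e, he, ← hmul, inv_mul_cancel_left₀ hne']
  -- the pivot element a = x * y⁻¹
  have hy0 : y ≠ 0 := fun h => hy1 (h ▸ O₁.zero_mem)
  have hx0 : x ≠ 0 := fun h => hx2 (h ▸ O₂.zero_mem)
  have hvx1 : O₁.valuation x ≤ 1 := (O₁.valuation_le_one_iff x).mpr hx1
  have hvx2 : 1 < O₂.valuation x := lt_of_not_ge fun h => hx2 ((O₂.valuation_le_one_iff x).mp h)
  have hvy2 : O₂.valuation y ≤ 1 := (O₂.valuation_le_one_iff y).mpr hy2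
  have hvy1 : 1 < O₁.valuation y := lt_of_not_ge fun h => hy1 ((O₁.valuation_le_one_iff y).mp h)
  set a : K := x * y⁻¹ with ha_def
  have ha0 : a ≠ 0 := mul_ne_zero hx0 (inv_ne_zero hy0)
  have hvy1' : (0:_) < O₁.valuation y := zero_lt_iff.mpr ((Valuation.ne_zero_iff _).mpr hy0)
  have hvy2' : (0:_) < O₂.valuation y := zero_lt_iff.mpr ((Valuation.ne_zero_iff _).mpr hy0)
  have hva1 : O₁.valuation a < 1 := by
    rw [ha_def, map_mul, map_inv₀]
    calc O₁.valuation x * (O₁.valuation y)⁻¹ ≤ 1 * (O₁.valuation y)⁻¹ := by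
          gcongr
        _ < 1 := by
          rw [one_mul]
          exact (inv_lt_one₀ hvy1').mpr hvy1
  have hva2 : 1 < O₂.valuation a := by
    rw [ha_def, map_mul, map_inv₀]
    have h1' : 1 ≤ (O₂.valuation y)⁻¹ := (one_le_inv₀ hvy2').mpr hvy2
    calc (1:_) < O₂.valuation x := hvx2
      _ = O₂.valuation x * 1 := (mul_one _).symm
      _ ≤ O₂.valuation x * (O₂.valuation y)⁻¹ := by gcongr
  obtain ⟨ha, haH, hae⟩ := key a hva1 hva2
  refine ⟨O₁, fun u hu => ?_⟩
  have hvu1 : O₁.valuation (u : K) = 1 := (O₁.mem_unitGroup_iff u).mp hu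
  rcases le_or_gt 1 (O₂.valuation (u : K)) with hcase | hcase
  · -- use w = u * a
    have hw1 : O₁.valuation ((u : K) * a) < 1 := by
      rw [map_mul, hvu1, one_mul]; exact hva1
    have hw2 : 1 < O₂.valuation ((u : K) * a) := by
      rw [map_mul]
      calc (1:_) < O₂.valuation a := hva2
        _ = 1 * O₂.valuation a := (one_mul _).symm
        _ ≤ O₂.valuation (u : K) * O₂.valuation a := by gcongr
    obtain ⟨g, gH, ge⟩ := key _ hw1 hw2
    have : u = g * ha⁻¹ := by
      ext
      push_cast
      rw [ge, hae]
      field_simp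
    rw [this]
    exact H.mul_mem gH (H.inv_mem haH)
  · -- use w = u⁻¹ * a
    have hvu1' : O₁.valuation ((u⁻¹ : Kˣ) : K) = 1 := by
      push_cast
      rw [map_inv₀, hvu1, inv_one]
    have hvu2' : 1 < O₂.valuation ((u⁻¹ : Kˣ) : K) := by
      push_cast
      rw [map_inv₀]
      have h0 : (0:_) < O₂.valuation (u : K) :=
        zero_lt_iff.mpr ((Valuation.ne_zero_iff _).mpr (Units.ne_zero u))
      exact (one_lt_inv₀ h0).mpr hcase
    have hw1 : O₁.valuation (((u⁻¹ : Kˣ) : K) * a) < 1 := by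
      rw [map_mul, hvu1', one_mul]; exact hva1
    have hw2 : 1 < O₂.valuation (((u⁻¹ : Kˣ) : K) * a) := by
      rw [map_mul]
      calc (1:_) < O₂.valuation ((u⁻¹ : Kˣ) : K) := hvu2'
        _ = O₂.valuation ((u⁻¹ : Kˣ) : K) * 1 := (mul_one _).symm
        _ ≤ _ := by gcongr
    obtain ⟨g, gH, ge⟩ := key _ hw1 hw2
    have : u = ha * g⁻¹ := by
      ext
      push_cast
      rw [ge, hae]
      push_cast
      field_simp
    rw [this]
    exact H.mul_mem haH (H.inv_mem gH)
end

section
/- Let K be a field, ℓ a prime, and T a rigid subgroup of K^× with K^{×ℓ} ⊆ T. Let (H_i)_{i∈I} be a family of valuative subgroups of K^× with T ⊆ H_i for every i. Then the intersection ⋂_{i∈I} H_i is valuative. -/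
/-- A subgroup `T ≤ K^×` (containing `K^{×ℓ}`) is rigid if for every `x ∈ K^× \ T` the
subgroup of `K^×/T` generated by the images of `x` and `1 - x` is cyclic. -/
def IsRigid {K : Type*} [Field K] (T : Subgroup Kˣ) : Prop :=
  ∀ x : Kˣ, x ∉ T → ∀ h : (1 : K) - (x : K) ≠ 0,
    IsCyclic ↥(Subgroup.closure {(QuotientGroup.mk x : Kˣ ⧸ T),
      QuotientGroup.mk (Units.mk0 ((1 : K) - (x : K)) h)})

/-- A subgroup `H ≤ K^×` is valuative if it contains the unit group of a valuation subring. -/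
def IsValuative {K : Type*} [Field K] (H : Subgroup Kˣ) : Prop :=
  ∃ O : ValuationSubring K, O.unitGroup ≤ H

section OrderAux

variable {Γ : Type*} [LinearOrderedCommGroupWithZero Γ]

theorem stmt3_mul_lt_one {a b : Γ} (ha : a ≤ 1) (hb : b < 1) : a * b < 1 :=
  lt_of_le_of_lt (by simpa using mul_le_mul_left ha b) hb

theorem stmt3_inv_lt_one {a : Γ} (h0 : a ≠ 0) (h : 1 < a) : a⁻¹ < 1 := by
  by_contra hcon
  push_neg at hcon
  have := mul_le_mul_right hcon a
  rw [mul_inv_cancel₀ h0, mul_one] at this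
  exact absurd this (not_le.mpr h)

theorem stmt3_one_le_inv {a : Γ} (h0 : a ≠ 0) (h : a ≤ 1) : 1 ≤ a⁻¹ := by
  have := mul_le_mul_left h a⁻¹
  rwa [mul_inv_cancel₀ h0, one_mul] at this

theorem stmt3_mul_lt_mul_left {a x y : Γ} (ha : a ≠ 0) (h : x < y) : a * x < a * y := by
  by_contra hcon
  push_neg at hcon
  have := mul_le_mul_right hcon a⁻¹
  rw [← mul_assoc, ← mul_assoc, inv_mul_cancel₀ ha, one_mul, one_mul] at this
  exact absurd this (not_le.mpr h)

theorem stmt3_mul_lt_self {a z : Γ} (ha : a ≠ 0) (hz : z < 1) : a * z < a := by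
  have := stmt3_mul_lt_mul_left ha hz
  rwa [mul_one] at this

theorem stmt3_lt_mul_self {a z : Γ} (ha : a ≠ 0) (hz : 1 < z) : a < a * z := by
  have := stmt3_mul_lt_mul_left ha hz
  rwa [mul_one] at this

theorem stmt3_pow_le_self {a : Γ} (ha : a ≤ 1) {n : ℕ} (hn : n ≠ 0) : a ^ n ≤ a := by
  obtain ⟨m, rfl⟩ := Nat.exists_eq_succ_of_ne_zero hn
  calc a ^ (m + 1) = a ^ m * a := by rw [pow_succ]
  _ ≤ 1 * a := mul_le_mul_left (pow_le_one' ha m) a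
  _ = a := one_mul a

theorem stmt3_self_le_pow {a : Γ} (ha : 1 ≤ a) {n : ℕ} (hn : n ≠ 0) : a ≤ a ^ n := by
  obtain ⟨m, rfl⟩ := Nat.exists_eq_succ_of_ne_zero hn
  calc a = 1 * a := (one_mul a).symm
  _ ≤ a ^ m * a := mul_le_mul_left (one_le_pow_of_one_le' ha m) a
  _ = a ^ (m + 1) := (pow_succ a m).symm

theorem stmt3_le_of_mul_inv_le_one {a b : Γ} (hb : b ≠ 0) (h : a * b⁻¹ ≤ 1) : a ≤ b := by
  have := mul_le_mul_left h b
  rwa [inv_mul_cancel_right₀ hb, one_mul] at this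

end OrderAux

section GroupAux

/-- A subgroup contained in a union of two subgroups is contained in one of them. -/
theorem stmt3_le_or_le {M : Type*} [Group M] (U G₁ G₂ : Subgroup M)
    (h : ∀ u ∈ U, u ∈ G₁ ∨ u ∈ G₂) : U ≤ G₁ ∨ U ≤ G₂ := by
  by_contra hcon
  push_neg at hcon
  obtain ⟨h1, h2⟩ := hcon
  obtain ⟨u, hu, hu1⟩ := SetLike.not_le_iff_exists.mp h1
  obtain ⟨w, hw, hw2⟩ := SetLike.not_le_iff_exists.mp h2
  have hu2 : u ∈ G₂ := (h u hu).resolve_left hu1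
  have hw1 : w ∈ G₁ := (h w hw).resolve_right hw2
  rcases h (u * w) (mul_mem hu hw) with huw | huw
  · exact hu1 (by simpa using mul_mem huw (inv_mem hw1))
  · exact hw2 (by simpa using mul_mem (inv_mem hu2) huw)

theorem stmt3_mem_of_zpow_mem {M : Type*} [CommGroup M] (G : Subgroup M) (x : M) {k l : ℤ}
    (hco : IsCoprime k l) (hk : x ^ k ∈ G) (hl : x ^ l ∈ G) : x ∈ G := by
  obtain ⟨m, n, hmn⟩ := hco
  have : x = (x ^ k) ^ m * (x ^ l) ^ n := by
    rw [← zpow_mul, ← zpow_mul, ← zpow_add, mul_comm k m, mul_comm l n, hmn, zpow_one]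
  rw [this]
  exact mul_mem (Subgroup.zpow_mem G hk m) (Subgroup.zpow_mem G hl n)

theorem stmt3_coprime {ℓ : ℕ} (hℓ : ℓ.Prime) {k : ℤ} (h : ¬ (ℓ : ℤ) ∣ k) :
    IsCoprime k (ℓ : ℤ) := by
  rw [Int.isCoprime_iff_gcd_eq_one]
  have hd : Int.gcd k (ℓ : ℤ) ∣ ℓ := by
    have := Int.gcd_dvd_right (a := k) (b := (ℓ : ℤ))
    exact_mod_cast Int.ofNat_dvd.mp (by exact_mod_cast this)
  rcases (Nat.dvd_prime hℓ).mp hd with h1 | h1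
  · exact h1
  · exfalso
    apply h
    have := Int.gcd_dvd_left (a := k) (b := (ℓ : ℤ))
    rwa [h1] at this

end GroupAux

section ValAux

variable {K : Type*} [Field K]

theorem stmt3_mem_unitGroup_iff (A : ValuationSubring K) (x : Kˣ) :
    x ∈ A.unitGroup ↔ (x : K) ∈ A ∧ ((x : K)⁻¹ : K) ∈ A := by
  rw [ValuationSubring.mem_unitGroup_iff]
  constructor
  · intro h
    refine ⟨A.mem_of_valuation_le_one _ h.le, A.mem_of_valuation_le_one _ ?_⟩
    rw [map_inv₀, h, inv_one]
  · rintro ⟨h1, h2⟩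
    have h1' : A.valuation x ≤ 1 := (A.valuation_le_one_iff _).mpr h1
    have h2' : A.valuation ((x : K)⁻¹) ≤ 1 := (A.valuation_le_one_iff _).mpr h2
    rw [map_inv₀] at h2'
    have hx0 : A.valuation x ≠ 0 := (Valuation.ne_zero_iff _).mpr (Units.ne_zero x)
    refine le_antisymm h1' ?_
    have := mul_le_mul_right h2' (A.valuation x)
    rwa [mul_inv_cancel₀ hx0, mul_one] at this

/-- The key bound: every element of the subring generated by two valuation subrings has
`v₁`-value bounded by that of some nonzero element of `O₂`. -/
theorem stmt3_exists_bound (O₁ O₂ : ValuationSubring K) {c : K}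
    (hc : c ∈ Subring.closure ((O₁ : Set K) ∪ (O₂ : Set K))) :
    ∃ b : K, b ∈ O₂ ∧ b ≠ 0 ∧ c * b⁻¹ ∈ O₁ := by
  induction hc using Subring.closure_induction with
  | mem x hx =>
    by_cases hx1 : x ∈ O₁
    · exact ⟨1, O₂.one_mem, one_ne_zero, by simpa using hx1⟩
    · have hx2 : x ∈ O₂ := by
        rcases hx with h | h
        · exact absurd h hx1
        · exact h
      have hx0 : x ≠ 0 := fun h => hx1 (h ▸ O₁.zero_mem)
      exact ⟨x, hx2, hx0, by rw [mul_inv_cancel₀ hx0]; exact O₁.one_mem⟩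
  | zero => exact ⟨1, O₂.one_mem, one_ne_zero, by simpa using O₁.zero_mem⟩
  | one => exact ⟨1, O₂.one_mem, one_ne_zero, by simpa using O₁.one_mem⟩
  | add x y hx hy ihx ihy =>
    obtain ⟨b₁, hb₁, hb₁0, h1⟩ := ihx
    obtain ⟨b₂, hb₂, hb₂0, h2⟩ := ihy
    rcases O₁.mem_or_inv_mem (b₂ * b₁⁻¹) with hcase | hcase
    · refine ⟨b₁, hb₁, hb₁0, ?_⟩
      have : (x + y) * b₁⁻¹ = x * b₁⁻¹ + (y * b₂⁻¹) * (b₂ * b₁⁻¹) := by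
        field_simp
      rw [this]
      exact O₁.add_mem _ _ h1 (O₁.mul_mem _ _ h2 hcase)
    · refine ⟨b₂, hb₂, hb₂0, ?_⟩
      rw [mul_inv, inv_inv] at hcase
      have : (x + y) * b₂⁻¹ = (x * b₁⁻¹) * (b₁ * b₂⁻¹) + y * b₂⁻¹ := by
        field_simp
      rw [this]
      exact O₁.add_mem _ _ (O₁.mul_mem _ _ h1 (by rwa [mul_comm b₂⁻¹ b₁] at hcase)) h2
  | neg x hx ihx =>
    obtain ⟨b, hb, hb0, h⟩ := ihx
    exact ⟨b, hb, hb0, by rw [neg_mul]; exact O₁.neg_mem _ h⟩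
  | mul x y hx hy ihx ihy =>
    obtain ⟨b₁, hb₁, hb₁0, h1⟩ := ihx
    obtain ⟨b₂, hb₂, hb₂0, h2⟩ := ihy
    refine ⟨b₁ * b₂, O₂.mul_mem _ _ hb₁ hb₂, mul_ne_zero hb₁0 hb₂0, ?_⟩
    have : (x * y) * (b₁ * b₂)⁻¹ = (x * b₁⁻¹) * (y * b₂⁻¹) := by
      field_simp
    rw [this]
    exact O₁.mul_mem _ _ h1 h2

end ValAux

section RigidAux

variable {K : Type*} [Field K]

theorem stmt3_exp {ℓ : ℕ} {T : Subgroup Kˣ} (hpow : ∀ x : Kˣ, x ^ ℓ ∈ T)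
    (q : Kˣ ⧸ T) : q ^ ℓ = 1 := by
  induction q using QuotientGroup.induction_on with
  | H u =>
    rw [← QuotientGroup.mk_pow]
    exact (QuotientGroup.eq_one_iff _).mpr (hpow u)

theorem stmt3_rigid_zpow {ℓ : ℕ} (hℓ : ℓ.Prime) {T : Subgroup Kˣ}
    (hpow : ∀ x : Kˣ, x ^ ℓ ∈ T) (hrig : IsRigid T) {x : Kˣ} (hx : x ∉ T)
    (h : (1 : K) - (x : K) ≠ 0) :
    ∃ k : ℤ, (QuotientGroup.mk (Units.mk0 ((1 : K) - (x : K)) h) : Kˣ ⧸ T)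
      = (QuotientGroup.mk x : Kˣ ⧸ T) ^ k := by
  have hcyc := hrig x hx h
  set X : Kˣ ⧸ T := QuotientGroup.mk x with hX
  set Y : Kˣ ⧸ T := QuotientGroup.mk (Units.mk0 ((1 : K) - (x : K)) h) with hY
  have hXC : X ∈ Subgroup.closure {X, Y} := Subgroup.subset_closure (by simp)
  have hYC : Y ∈ Subgroup.closure {X, Y} := Subgroup.subset_closure (by simp)
  obtain ⟨g, hg⟩ := hcyc.exists_generator
  obtain ⟨s, hs⟩ := Subgroup.mem_zpowers_iff.mp (hg ⟨X, hXC⟩)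
  obtain ⟨r, hr⟩ := Subgroup.mem_zpowers_iff.mp (hg ⟨Y, hYC⟩)
  have hsQ : ((g : Kˣ ⧸ T)) ^ s = X := by
    have := congrArg (Subtype.val) hs
    simpa using this
  have hrQ : ((g : Kˣ ⧸ T)) ^ r = Y := by
    have := congrArg (Subtype.val) hr
    simpa using this
  have hexp : ((g : Kˣ ⧸ T)) ^ (ℓ : ℤ) = 1 := by
    rw [zpow_natCast]
    exact stmt3_exp hpow _
  have hXne : X ≠ 1 := by
    rw [hX, Ne, QuotientGroup.eq_one_iff]
    exact hx
  have hnd : ¬ (ℓ : ℤ) ∣ s := by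
    rintro ⟨t, rfl⟩
    apply hXne
    rw [← hsQ, zpow_mul (g : Kˣ ⧸ T) (ℓ : ℤ) t, hexp, one_zpow]
  obtain ⟨m, n, hmn⟩ := stmt3_coprime hℓ hnd
  have e1 : (g : Kˣ ⧸ T) ^ (m * s) = ((g : Kˣ ⧸ T) ^ s) ^ m := by
    rw [mul_comm, zpow_mul (g : Kˣ ⧸ T) s m]
  have e2 : (g : Kˣ ⧸ T) ^ (n * (ℓ : ℤ)) = ((g : Kˣ ⧸ T) ^ (ℓ : ℤ)) ^ n := by
    rw [mul_comm, zpow_mul (g : Kˣ ⧸ T) (ℓ : ℤ) n]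
  have hgen : (g : Kˣ ⧸ T) = X ^ m := by
    calc (g : Kˣ ⧸ T) = (g : Kˣ ⧸ T) ^ (m * s + n * (ℓ : ℤ)) := by rw [hmn, zpow_one]
    _ = ((g : Kˣ ⧸ T) ^ s) ^ m * ((g : Kˣ ⧸ T) ^ (ℓ : ℤ)) ^ n := by
        rw [zpow_add (g : Kˣ ⧸ T) (m * s) (n * (ℓ : ℤ)), e1, e2]
    _ = X ^ m := by rw [hsQ, hexp, one_zpow]; exact mul_one (X ^ m)
  refine ⟨m * r, ?_⟩
  rw [← hrQ, hgen, ← zpow_mul X m r]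

end RigidAux

section Comparable

variable {K : Type*} [Field K]

/-- The heart of the argument: two maximal valuation subrings compatible with valuative
subgroups containing a rigid subgroup are comparable. -/
theorem stmt3_comparable {ℓ : ℕ} (hℓ : ℓ.Prime) {T : Subgroup Kˣ}
    (hpow : ∀ x : Kˣ, x ^ ℓ ∈ T) (hrig : IsRigid T)
    {H₁ H₂ : Subgroup Kˣ} (hT₁ : T ≤ H₁) (hT₂ : T ≤ H₂)
    {O₁ O₂ : ValuationSubring K} (hO₁ : O₁.unitGroup ≤ H₁) (hO₂ : O₂.unitGroup ≤ H₂)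
    (hmax₁ : ∀ O', O₁ ≤ O' → O'.unitGroup ≤ H₁ → O' = O₁)
    (hmax₂ : ∀ O', O₂ ≤ O' → O'.unitGroup ≤ H₂ → O' = O₂) :
    O₁ ≤ O₂ ∨ O₂ ≤ O₁ := by
  classical
  by_contra hcon
  push_neg at hcon
  obtain ⟨h12, h21⟩ := hcon
  obtain ⟨a₀, ha₀, ha₀'⟩ := SetLike.not_le_iff_exists.mp h12
  obtain ⟨b₀, hb₀, hb₀'⟩ := SetLike.not_le_iff_exists.mp h21
  -- the compositum valuation subring
  set R : Subring K := Subring.closure ((O₁ : Set K) ∪ (O₂ : Set K)) with hR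
  have hO₁R : ∀ x : K, x ∈ O₁ → x ∈ R := fun x hx =>
    Subring.subset_closure (Set.mem_union_left _ hx)
  have hO₂R : ∀ x : K, x ∈ O₂ → x ∈ R := fun x hx =>
    Subring.subset_closure (Set.mem_union_right _ hx)
  set O : ValuationSubring K :=
    { R with mem_or_inv_mem' := fun x => (O₁.mem_or_inv_mem x).imp (hO₁R x) (hO₁R x⁻¹) } with hO
  have hmemO : ∀ x : K, x ∈ O ↔ x ∈ R := fun x => Iff.rfl
  have hO₁O : O₁ ≤ O := fun x hx => hO₁R x hx
  have hO₂O : O₂ ≤ O := fun x hx => hO₂R x hx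
  -- basic elements
  have ha₀0 : a₀ ≠ 0 := fun h => ha₀' (h ▸ O₂.zero_mem)
  have hb₀0 : b₀ ≠ 0 := fun h => hb₀' (h ▸ O₁.zero_mem)
  have hv₁a₀ : O₁.valuation a₀ ≤ 1 := (O₁.valuation_le_one_iff _).mpr ha₀
  have hv₂b₀ : O₂.valuation b₀ ≤ 1 := (O₂.valuation_le_one_iff _).mpr hb₀
  have hv₂a₀ : 1 < O₂.valuation a₀ :=
    not_le.mp (fun hle => ha₀' (O₂.mem_of_valuation_le_one _ hle))
  have hv₁b₀ : 1 < O₁.valuation b₀ :=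
    not_le.mp (fun hle => hb₀' (O₁.mem_of_valuation_le_one _ hle))
  have hva₀0 : O₂.valuation a₀ ≠ 0 := (Valuation.ne_zero_iff _).mpr ha₀0
  have hvb₀0₁ : O₁.valuation b₀ ≠ 0 := (Valuation.ne_zero_iff _).mpr hb₀0
  have hvb₀0₂ : O₂.valuation b₀ ≠ 0 := (Valuation.ne_zero_iff _).mpr hb₀0
  -- the special element z with v₁ z < 1 < v₂ z
  set z : K := a₀ * b₀⁻¹ with hz
  have hzne : z ≠ 0 := mul_ne_zero ha₀0 (inv_ne_zero hb₀0)
  have hv₁z : O₁.valuation z < 1 := by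
    rw [hz, map_mul, map_inv₀]
    exact stmt3_mul_lt_one hv₁a₀ (stmt3_inv_lt_one hvb₀0₁ hv₁b₀)
  have hv₂z : 1 < O₂.valuation z := by
    rw [hz, map_mul, map_inv₀]
    calc (1 : _) < O₂.valuation a₀ := hv₂a₀
    _ = O₂.valuation a₀ * 1 := (mul_one _).symm
    _ ≤ O₂.valuation a₀ * (O₂.valuation b₀)⁻¹ :=
        mul_le_mul_right (stmt3_one_le_inv hvb₀0₂ hv₂b₀) _
  -- the per-unit claim
  have key : ∀ c : Kˣ, c ∈ O.unitGroup → c ∈ H₁ ∨ c ∈ H₂ := by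
    intro c hc
    by_cases hcT : c ∈ T
    · exact Or.inl (hT₁ hcT)
    rw [stmt3_mem_unitGroup_iff] at hc
    obtain ⟨hcO, hcO'⟩ := hc
    have hcR : ((c : Kˣ) : K) ∈ Subring.closure ((O₁ : Set K) ∪ (O₂ : Set K)) := hcO
    have hcR' : (((c : Kˣ) : K)⁻¹ : K) ∈ Subring.closure ((O₂ : Set K) ∪ (O₁ : Set K)) := by
      rw [Set.union_comm]; exact hcO'
    obtain ⟨b, hbO₂, hbne, hb⟩ := stmt3_exists_bound O₁ O₂ hcR
    obtain ⟨a, haO₁, hane, ha⟩ := stmt3_exists_bound O₂ O₁ hcR'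
    have hc0 : ((c : Kˣ) : K) ≠ 0 := Units.ne_zero c
    have hvb0 : O₁.valuation b ≠ 0 := (Valuation.ne_zero_iff _).mpr hbne
    have hvb0₂ : O₂.valuation b ≠ 0 := (Valuation.ne_zero_iff _).mpr hbne
    have hva0₂ : O₂.valuation a ≠ 0 := (Valuation.ne_zero_iff _).mpr hane
    have hva0₁ : O₁.valuation a ≠ 0 := (Valuation.ne_zero_iff _).mpr hane
    have hvc0₂ : O₂.valuation ((c : Kˣ) : K) ≠ 0 := (Valuation.ne_zero_iff _).mpr hc0
    have hvc₁ : O₁.valuation ((c : Kˣ) : K) ≤ O₁.valuation b := by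
      have h := (O₁.valuation_le_one_iff _).mpr hb
      rw [map_mul, map_inv₀] at h
      exact stmt3_le_of_mul_inv_le_one hvb0 h
    have hvc₂ : (O₂.valuation a)⁻¹ ≤ O₂.valuation ((c : Kˣ) : K) := by
      have h := (O₂.valuation_le_one_iff _).mpr ha
      rw [map_mul, map_inv₀, map_inv₀, mul_comm] at h
      exact stmt3_le_of_mul_inv_le_one hvc0₂ h
    -- build the auxiliary element y
    set p : K := if a ∈ O₂ then 1 else a with hp
    set q : K := if b ∈ O₁ then 1 else b⁻¹ with hq
    have hpne : p ≠ 0 := by rw [hp]; split_ifs; exacts [one_ne_zero, hane]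
    have hqne : q ≠ 0 := by rw [hq]; split_ifs; exacts [one_ne_zero, inv_ne_zero hbne]
    have hp₁ : O₁.valuation p ≤ 1 := by
      rw [hp]; split_ifs
      · rw [map_one]
      · exact (O₁.valuation_le_one_iff _).mpr haO₁
    have hp₂a : O₂.valuation a ≤ O₂.valuation p := by
      rw [hp]; split_ifs with hcase
      · rw [map_one]; exact (O₂.valuation_le_one_iff _).mpr hcase
      · exact le_refl _
    have hp₂1 : 1 ≤ O₂.valuation p := by
      rw [hp]; split_ifs with hcase
      · rw [map_one]
      · exact le_of_lt (not_le.mp (fun hle => hcase (O₂.mem_of_valuation_le_one _ hle)))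
    have hq₂ : 1 ≤ O₂.valuation q := by
      rw [hq]; split_ifs with hcase
      · rw [map_one]
      · rw [map_inv₀]
        exact stmt3_one_le_inv hvb0₂ ((O₂.valuation_le_one_iff _).mpr hbO₂)
    have hq₁1 : O₁.valuation q ≤ 1 := by
      rw [hq]; split_ifs with hcase
      · rw [map_one]
      · rw [map_inv₀]
        exact le_of_lt (stmt3_inv_lt_one hvb0
          (not_le.mp (fun hle => hcase (O₁.mem_of_valuation_le_one _ hle))))
    have hq₁b : O₁.valuation q ≤ (O₁.valuation b)⁻¹ := by
      rw [hq]; split_ifs with hcase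
      · rw [map_one]
        exact stmt3_one_le_inv hvb0 ((O₁.valuation_le_one_iff _).mpr hcase)
      · rw [map_inv₀]
    set y : K := p * q * z with hy
    have hyne : y ≠ 0 := mul_ne_zero (mul_ne_zero hpne hqne) hzne
    have hv₁y1 : O₁.valuation y < 1 := by
      rw [hy, map_mul, map_mul]
      exact stmt3_mul_lt_one (mul_le_one' hp₁ hq₁1) hv₁z
    have hv₁yb : O₁.valuation y < (O₁.valuation b)⁻¹ := by
      rw [hy, map_mul, map_mul]
      calc O₁.valuation p * O₁.valuation q * O₁.valuation z
          ≤ (O₁.valuation b)⁻¹ * O₁.valuation z := by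
            refine mul_le_mul_left ?_ _
            calc O₁.valuation p * O₁.valuation q ≤ 1 * (O₁.valuation b)⁻¹ :=
              mul_le_mul' hp₁ hq₁b
            _ = (O₁.valuation b)⁻¹ := one_mul _
      _ < (O₁.valuation b)⁻¹ := stmt3_mul_lt_self (inv_ne_zero hvb0) hv₁z
    have hv₂y1 : 1 < O₂.valuation y := by
      rw [hy, map_mul, map_mul]
      calc (1 : _) < O₂.valuation z := hv₂z
      _ = 1 * O₂.valuation z := (one_mul _).symm
      _ ≤ O₂.valuation p * O₂.valuation q * O₂.valuation z :=
          mul_le_mul_left (one_le_mul hp₂1 hq₂) _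
    have hv₂ya : O₂.valuation a < O₂.valuation y := by
      rw [hy, map_mul, map_mul]
      have h1 : O₂.valuation a ≤ O₂.valuation p * O₂.valuation q := by
        calc O₂.valuation a = O₂.valuation a * 1 := (mul_one _).symm
        _ ≤ O₂.valuation p * O₂.valuation q := mul_le_mul' hp₂a hq₂
      have h2 : O₂.valuation p * O₂.valuation q <
          O₂.valuation p * O₂.valuation q * O₂.valuation z :=
        stmt3_lt_mul_self (mul_ne_zero ((Valuation.ne_zero_iff _).mpr hpne)
          ((Valuation.ne_zero_iff _).mpr hqne)) hv₂z
      exact lt_of_le_of_lt h1 h2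
    -- the element x = c * y^ℓ
    have hv₁x : O₁.valuation (((c : Kˣ) : K) * y ^ ℓ) < 1 := by
      rw [map_mul, map_pow]
      calc O₁.valuation ((c : Kˣ) : K) * O₁.valuation y ^ ℓ
          ≤ O₁.valuation b * O₁.valuation y ^ ℓ := mul_le_mul_left hvc₁ _
      _ ≤ O₁.valuation b * O₁.valuation y :=
          mul_le_mul_right (stmt3_pow_le_self (le_of_lt hv₁y1) hℓ.ne_zero) _
      _ < O₁.valuation b * (O₁.valuation b)⁻¹ := stmt3_mul_lt_mul_left hvb0 hv₁yb
      _ = 1 := mul_inv_cancel₀ hvb0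
    have hv₂x : 1 < O₂.valuation (((c : Kˣ) : K) * y ^ ℓ) := by
      rw [map_mul, map_pow]
      calc (1 : _) = (O₂.valuation a)⁻¹ * O₂.valuation a := (inv_mul_cancel₀ hva0₂).symm
      _ < (O₂.valuation a)⁻¹ * O₂.valuation y :=
          stmt3_mul_lt_mul_left (inv_ne_zero hva0₂) hv₂ya
      _ ≤ O₂.valuation ((c : Kˣ) : K) * O₂.valuation y := mul_le_mul_left hvc₂ _
      _ ≤ O₂.valuation ((c : Kˣ) : K) * O₂.valuation y ^ ℓ :=
          mul_le_mul_right (stmt3_self_le_pow (le_of_lt hv₂y1) hℓ.ne_zero) _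
    -- as units
    set Y : Kˣ := Units.mk0 y hyne with hYdef
    set X : Kˣ := c * Y ^ ℓ with hXdef
    have hXval : ((X : Kˣ) : K) = ((c : Kˣ) : K) * y ^ ℓ := by
      rw [hXdef, Units.val_mul, Units.val_pow_eq_pow_val, hYdef, Units.val_mk0]
    have hv₁X : O₁.valuation ((X : Kˣ) : K) < 1 := by rw [hXval]; exact hv₁x
    have hv₂X : 1 < O₂.valuation ((X : Kˣ) : K) := by rw [hXval]; exact hv₂x
    have hX0 : ((X : Kˣ) : K) ≠ 0 := Units.ne_zero X
    have hvX0₂ : O₂.valuation ((X : Kˣ) : K) ≠ 0 := (Valuation.ne_zero_iff _).mpr hX0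
    have hceq : c = X * (Y ^ ℓ)⁻¹ := by rw [hXdef, mul_inv_cancel_right]
    have hXT : X ∉ T := by
      intro hXmem
      apply hcT
      rw [hceq]
      exact T.mul_mem hXmem (T.inv_mem (hpow Y))
    have h1X : (1 : K) - ((X : Kˣ) : K) ≠ 0 := by
      intro hsub
      have h1 : (1 : K) = ((X : Kˣ) : K) := sub_eq_zero.mp hsub
      rw [← h1, map_one] at hv₁X
      exact lt_irrefl _ hv₁X
    have hv₂Xinv : O₂.valuation (((X : Kˣ) : K)⁻¹) < 1 := by
      rw [map_inv₀]
      exact stmt3_inv_lt_one hvX0₂ hv₂X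
    have h1X' : (1 : K) - ((X : Kˣ) : K)⁻¹ ≠ 0 := by
      intro hsub
      have h1 : (1 : K) = ((X : Kˣ) : K)⁻¹ := sub_eq_zero.mp hsub
      rw [← h1, map_one] at hv₂Xinv
      exact lt_irrefl _ hv₂Xinv
    set U₁ : Kˣ := Units.mk0 ((1 : K) - ((X : Kˣ) : K)) h1X with hU₁def
    set U₂ : Kˣ := Units.mk0 ((1 : K) - ((X : Kˣ) : K)⁻¹) h1X' with hU₂def
    have hU₁mem : U₁ ∈ O₁.unitGroup := by
      rw [ValuationSubring.mem_unitGroup_iff]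
      exact O₁.valuation.map_one_sub_of_lt hv₁X
    have hU₂mem : (-U₂) ∈ O₂.unitGroup := by
      rw [ValuationSubring.mem_unitGroup_iff]
      have : ((-U₂ : Kˣ) : K) = -((1 : K) - ((X : Kˣ) : K)⁻¹) := rfl
      rw [this, Valuation.map_neg]
      exact O₂.valuation.map_one_sub_of_lt hv₂Xinv
    have hU₁X : U₁ * X⁻¹ = -U₂ := by
      ext
      rw [Units.val_mul, Units.val_neg, hU₁def, hU₂def, Units.val_mk0, Units.val_mk0,
        Units.val_inv_eq_inv_val]
      field_simp
      ring
    -- rigidity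
    obtain ⟨k, hk⟩ := stmt3_rigid_zpow hℓ hpow hrig hXT h1X
    have hTmem : U₁⁻¹ * X ^ k ∈ T := by
      rw [← QuotientGroup.eq]
      rw [QuotientGroup.mk_zpow]
      exact hk
    have hXk : X ^ k ∈ H₁ := by
      have hrw : X ^ k = U₁ * (U₁⁻¹ * X ^ k) := by group
      rw [hrw]
      exact H₁.mul_mem (hO₁ hU₁mem) (hT₁ hTmem)
    have hXk1 : X ^ (k - 1) ∈ H₂ := by
      have hrw : X ^ (k - 1) = (U₁ * X⁻¹) * (U₁⁻¹ * X ^ k) := by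
        rw [zpow_sub_one, mul_mul_mul_comm U₁ X⁻¹ U₁⁻¹ (X ^ k), mul_inv_cancel, one_mul,
          mul_comm X⁻¹ (X ^ k)]
      rw [hrw, hU₁X]
      exact H₂.mul_mem (hO₂ hU₂mem) (hT₂ hTmem)
    have hXl₁ : X ^ ((ℓ : ℤ)) ∈ H₁ := by
      rw [zpow_natCast]; exact hT₁ (hpow X)
    have hXl₂ : X ^ ((ℓ : ℤ)) ∈ H₂ := by
      rw [zpow_natCast]; exact hT₂ (hpow X)
    by_cases hdvd : (ℓ : ℤ) ∣ k
    · right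
      have hnd1 : ¬ (ℓ : ℤ) ∣ (k - 1) := by
        intro hd
        have h1 : (ℓ : ℤ) ∣ k - (k - 1) := dvd_sub hdvd hd
        rw [show k - (k - 1) = 1 from by ring] at h1
        have h2 : (ℓ : ℤ) ≤ 1 := Int.le_of_dvd one_pos h1
        have h3 := hℓ.one_lt
        omega
      have hXH : X ∈ H₂ := stmt3_mem_of_zpow_mem H₂ X (stmt3_coprime hℓ hnd1) hXk1 hXl₂
      rw [hceq]
      exact H₂.mul_mem hXH (H₂.inv_mem (hT₂ (hpow Y)))
    · left
      have hXH : X ∈ H₁ := stmt3_mem_of_zpow_mem H₁ X (stmt3_coprime hℓ hdvd) hXk hXl₁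
      rw [hceq]
      exact H₁.mul_mem hXH (H₁.inv_mem (hT₁ (hpow Y)))
  -- conclude
  rcases stmt3_le_or_le O.unitGroup H₁ H₂ key with hle | hle
  · have heq := hmax₁ O hO₁O hle
    rw [← heq] at hb₀'
    exact hb₀' (hO₂O hb₀)
  · have heq := hmax₂ O hO₂O hle
    rw [← heq] at ha₀'
    exact ha₀' (hO₁O ha₀)

end Comparable

section Assemble

variable {K : Type*} [Field K]

/-- Every valuative subgroup admits a maximal compatible valuation subring. -/
theorem stmt3_exists_max (H : Subgroup Kˣ) (h : IsValuative H) :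
    ∃ O : ValuationSubring K, O.unitGroup ≤ H ∧
      ∀ O' : ValuationSubring K, O ≤ O' → O'.unitGroup ≤ H → O' = O := by
  obtain ⟨O₀, hO₀⟩ := h
  have hub : ∀ c ⊆ {O : ValuationSubring K | O.unitGroup ≤ H}, IsChain (· ≤ ·) c →
      ∀ y ∈ c, ∃ ub ∈ {O : ValuationSubring K | O.unitGroup ≤ H}, ∀ z ∈ c, z ≤ ub := by
    intro c hcs hchain y hyc
    haveI : Nonempty c := ⟨⟨y, hyc⟩⟩
    have hdir : Directed (· ≤ ·) (fun O : c => (O : ValuationSubring K).toSubring) := by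
      intro i j
      rcases hchain.total i.2 j.2 with hij | hji
      · exact ⟨j, fun x hx => hij hx, le_refl _⟩
      · exact ⟨i, le_refl _, fun x hx => hji hx⟩
    set Rs : Subring K := ⨆ O : c, (O : ValuationSubring K).toSubring with hRs
    have hmem : ∀ x : K, x ∈ Rs ↔ ∃ O : c, x ∈ (O : ValuationSubring K) := fun x =>
      Subring.mem_iSup_of_directed hdir
    have hvp : ∀ x : K, x ∈ Rs ∨ x⁻¹ ∈ Rs := fun x =>
      (y.mem_or_inv_mem x).imp (fun hx => (hmem x).mpr ⟨⟨y, hyc⟩, hx⟩)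
        (fun hx => (hmem x⁻¹).mpr ⟨⟨y, hyc⟩, hx⟩)
    set Om : ValuationSubring K := { Rs with mem_or_inv_mem' := hvp } with hOm
    refine ⟨Om, ?_, ?_⟩
    · intro u hu
      rw [stmt3_mem_unitGroup_iff] at hu
      obtain ⟨h1, h2⟩ := hu
      obtain ⟨i, hi⟩ := (hmem _).mp h1
      obtain ⟨j, hj⟩ := (hmem _).mp h2
      rcases hchain.total i.2 j.2 with hij | hji
      · exact hcs j.2 (((stmt3_mem_unitGroup_iff (j : ValuationSubring K) u)).mpr
          ⟨hij hi, hj⟩)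
      · exact hcs i.2 (((stmt3_mem_unitGroup_iff (i : ValuationSubring K) u)).mpr
          ⟨hi, hji hj⟩)
    · intro z hz
      intro x hx
      exact (hmem x).mpr ⟨⟨z, hz⟩, hx⟩
  obtain ⟨m, hm0, hm⟩ :=
    zorn_le_nonempty₀ {O : ValuationSubring K | O.unitGroup ≤ H} hub O₀ hO₀
  exact ⟨m, hm.prop, fun O' hle hH => (hm.eq_of_le hH hle).symm⟩

end Assemble

/-- If `T` is rigid (with `K^{×ℓ} ⊆ T`) and `(H_i)` is a family of valuative
subgroups containing `T`, then `⋂ H_i` is valuative. -/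
theorem stmt_3 {K : Type*} [Field K] (ℓ : ℕ) (hℓ : ℓ.Prime) (T : Subgroup Kˣ)
    (hpow : ∀ x : Kˣ, x ^ ℓ ∈ T) (hrig : IsRigid T)
    {ι : Type*} (Hf : ι → Subgroup Kˣ)
    (hval : ∀ i, IsValuative (Hf i)) (hTH : ∀ i, T ≤ Hf i) :
    IsValuative (⨅ i, Hf i) := by
  classical
  cases isEmpty_or_nonempty ι with
  | inl h =>
    refine ⟨⊤, ?_⟩
    intro u _
    rw [Subgroup.mem_iInf]
    intro i
    exact isEmptyElim i
  | inr hne =>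
    choose M hMH hMmax using fun i => stmt3_exists_max (Hf i) (hval i)
    have hcomp : ∀ i j, M i ≤ M j ∨ M j ≤ M i := fun i j =>
      stmt3_comparable hℓ hpow hrig (hTH i) (hTH j) (hMH i) (hMH j) (hMmax i) (hMmax j)
    set R : Subring K := ⨅ i, (M i).toSubring with hR
    have hmem : ∀ x : K, x ∈ R ↔ ∀ i, x ∈ M i := fun x => Subring.mem_iInf
    have hvp : ∀ x : K, x ∈ R ∨ x⁻¹ ∈ R := by
      intro x
      by_cases hx : ∀ i, x ∈ M i
      · exact Or.inl ((hmem x).mpr hx)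
      · push_neg at hx
        obtain ⟨i, hi⟩ := hx
        refine Or.inr ((hmem x⁻¹).mpr (fun j => ?_))
        rcases hcomp i j with hij | hji
        · exact hij (((M i).mem_or_inv_mem x).resolve_left hi)
        · rcases (M j).mem_or_inv_mem x with hmem' | hmem'
          · exact absurd (hji hmem') hi
          · exact hmem'
    set O : ValuationSubring K := { R with mem_or_inv_mem' := hvp } with hO
    refine ⟨O, ?_⟩
    intro u hu
    rw [stmt3_mem_unitGroup_iff] at hu
    obtain ⟨h1, h2⟩ := hu
    rw [Subgroup.mem_iInf]
    intro i
    exact hMH i ((stmt3_mem_unitGroup_iff (M i) u).mpr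
      ⟨(hmem _).mp h1 i, (hmem _).mp h2 i⟩)
end

section
/- Let K be a field, ℓ a prime, and T a subgroup of K^× with K^{×ℓ} ⊆ T and −1 ∈ T. Let Q be the quotient of the tensor product of abelian groups (K^×/T) ⊗_ℤ (K^×/T) by the subgroup generated by all elements ā ⊗ b̄, where a, b ∈ K^× are such that there exist s, t ∈ T with as + bt = 1. Then T is rigid if and only if for all x, y ∈ K^× whose images in K^×/T generate a non-cyclic subgroup, the class of x̄ ⊗ ȳ in Q is nonzero. (Q is the degree-2 part K₂^M(K)/T of the quotient of the Milnor K-ring of K by T.) -/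
open scoped TensorProduct

noncomputable instance {G : Type*} [CommGroup G] (T : Subgroup G) :
    Module ℤ (Additive (G ⧸ T)) :=
  AddCommGroup.toIntModule _

/-- The quotient `K^×/T`, written additively. -/
abbrev ModT (K : Type*) [Field K] (T : Subgroup Kˣ) := Additive (Kˣ ⧸ T)

/-- The image of `x` in `K^×/T`, written additively. -/
def modT {K : Type*} [Field K] (T : Subgroup Kˣ) (x : Kˣ) : ModT K T :=
  Additive.ofMul (QuotientGroup.mk x : Kˣ ⧸ T)

/-- The Steinberg relations modulo `T`: the subgroup of `(K^×/T) ⊗ (K^×/T)` generated by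
all `ā ⊗ b̄` where `a s + b t = 1` for some `s, t ∈ T`. -/
noncomputable def steinbergRel (K : Type*) [Field K] (T : Subgroup Kˣ) :
    AddSubgroup (ModT K T ⊗[ℤ] ModT K T) :=
  AddSubgroup.closure
    {z | ∃ a b : Kˣ, (∃ s ∈ T, ∃ t ∈ T,
        (a : K) * ((s : Kˣ) : K) + (b : K) * ((t : Kˣ) : K) = 1) ∧
      z = modT T a ⊗ₜ[ℤ] modT T b}

/-- If `y` is a power of `x`, the closure of the pair is cyclic. -/
lemma aux_cyclic_of_mem_zpowers {G : Type*} [Group G] {x y : G}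
    (h : y ∈ Subgroup.zpowers x) :
    IsCyclic ↥(Subgroup.closure {x, y}) := by
  have heq : Subgroup.closure {x, y} = Subgroup.zpowers x := by
    apply le_antisymm
    · rw [Subgroup.closure_le]
      rintro z hz
      simp only [Set.mem_insert_iff, Set.mem_singleton_iff] at hz
      rcases hz with h' | h'
      · rw [h']; exact Subgroup.mem_zpowers x
      · rw [h']; exact h
    · rw [Subgroup.zpowers_le]
      exact Subgroup.subset_closure (by simp)
  rw [heq]
  constructor
  refine ⟨⟨x, Subgroup.mem_zpowers x⟩, ?_⟩
  rintro ⟨z, hz⟩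
  obtain ⟨m, rfl⟩ := hz
  exact ⟨m, by ext; simp⟩

/-- In a cyclic subgroup generated by a pair, both elements are powers of a common element. -/
lemma aux_exists_zpow {G : Type*} [Group G] {x y : G}
    (h : IsCyclic ↥(Subgroup.closure {x, y})) :
    ∃ g : G, (∃ m : ℤ, g ^ m = x) ∧ (∃ n : ℤ, g ^ n = y) := by
  obtain ⟨⟨g, hg⟩, hgen⟩ := h.exists_generator
  have hx : x ∈ Subgroup.closure {x, y} := Subgroup.subset_closure (by simp)
  have hy : y ∈ Subgroup.closure {x, y} := Subgroup.subset_closure (by simp)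
  obtain ⟨m, hm⟩ := hgen ⟨x, hx⟩
  obtain ⟨n, hn⟩ := hgen ⟨y, hy⟩
  exact ⟨g, ⟨m, congrArg Subtype.val hm⟩, ⟨n, congrArg Subtype.val hn⟩⟩

/-- For an abelian group of exponent dividing `ℓ` and two "independent" elements `x, y`,
there are additive characters with values in `ZMod ℓ` separating them. -/
lemma aux_functionals {M : Type*} [AddCommGroup M] {ℓ : ℕ} (hℓ : ℓ.Prime)
    (hsmul : ∀ v : M, ℓ • v = 0) (x y : M)
    (hindep : ∀ m : ℤ, m • x ≠ y ∧ m • y ≠ x) :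
    ∃ φ ψ : M →+ ZMod ℓ, φ x = 1 ∧ φ y = 0 ∧ ψ x = 0 ∧ ψ y = 1 := by
  haveI : Fact ℓ.Prime := Fact.mk hℓ
  haveI : Module (ZMod ℓ) M := AddCommGroup.zmodModule hsmul
  have key : ∀ (u w : M) (e : ZMod ℓ), w = e • u → ∃ m : ℤ, m • u = w := by
    intro u w e hw
    refine ⟨(e.val : ℤ), ?_⟩
    have he : ((e.val : ℕ) : ZMod ℓ) = e := by simp [ZMod.natCast_val, ZMod.cast_id]
    rw [natCast_zsmul, ← Nat.cast_smul_eq_nsmul (ZMod ℓ), he]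
    exact hw.symm
  have hdep : ∀ c d : ZMod ℓ, c • x + d • y = 0 → c = 0 ∧ d = 0 := by
    intro c d hcd
    by_contra hne
    by_cases hd : d = 0
    · subst hd
      have hc : c ≠ 0 := fun hc => hne ⟨hc, rfl⟩
      have hx0 : c • x = 0 := by simpa using hcd
      have hx : x = 0 := by
        have h4 : c⁻¹ • (c • x) = (0 : M) := by rw [hx0, smul_zero]
        rwa [smul_smul, inv_mul_cancel₀ hc, one_smul] at h4
      exact (hindep 0).2 (by rw [zero_smul, hx])
    · have h3 : d⁻¹ • (c • x + d • y) = (0 : M) := by rw [hcd, smul_zero]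
      rw [smul_add, smul_smul, smul_smul, inv_mul_cancel₀ hd, one_smul] at h3
      have hy : y = (-(d⁻¹ * c)) • x := by
        rw [neg_smul]
        exact eq_neg_of_add_eq_zero_right h3
      obtain ⟨m, hm⟩ := key x y _ hy
      exact (hindep m).1 hm
  have hli : LinearIndependent (ZMod ℓ) ![x, y] := LinearIndependent.pair_iff.mpr hdep
  have heval : ∀ (i j : Fin 2) (g : M →ₗ[ZMod ℓ] ZMod ℓ),
      g.comp (Submodule.span (ZMod ℓ) (Set.range ![x, y])).subtype
        = (Finsupp.lapply i).comp hli.repr →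
      g (![x, y] j) = if j = i then 1 else 0 := by
    intro i j g hg
    have hmem : ![x, y] j ∈ Submodule.span (ZMod ℓ) (Set.range ![x, y]) :=
      Submodule.subset_span ⟨j, rfl⟩
    have h1 := congrFun (congrArg DFunLike.coe hg) ⟨_, hmem⟩
    simp only [LinearMap.comp_apply, Submodule.subtype_apply, Finsupp.lapply_apply] at h1
    rw [h1, hli.repr_eq_single j ⟨_, hmem⟩ rfl]
    simp [Finsupp.single_apply]
  obtain ⟨φ, hφ⟩ := LinearMap.exists_extend ((Finsupp.lapply 0).comp hli.repr)
  obtain ⟨ψ, hψ⟩ := LinearMap.exists_extend ((Finsupp.lapply 1).comp hli.repr)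
  refine ⟨φ.toAddMonoidHom, ψ.toAddMonoidHom, ?_, ?_, ?_, ?_⟩
  · simpa using heval 0 0 φ hφ
  · simpa using heval 0 1 φ hφ
  · simpa using heval 1 0 ψ hψ
  · simpa using heval 1 1 ψ hψ

set_option maxHeartbeats 2000000 in
/-- `T` is rigid iff for all `x, y ∈ K^×` whose images generate a non-cyclic
subgroup of `K^×/T`, the class of `x̄ ⊗ ȳ` in `K₂^M(K)/T` (the quotient `Q` of
`(K^×/T) ⊗ (K^×/T)` by the Steinberg relations) is nonzero. -/
theorem stmt_5 {K : Type*} [Field K] (ℓ : ℕ) (hℓ : ℓ.Prime) (T : Subgroup Kˣ)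
    (hpow : ∀ x : Kˣ, x ^ ℓ ∈ T) (hneg : (-1 : Kˣ) ∈ T) :
    IsRigid T ↔
      ∀ x y : Kˣ,
        ¬ IsCyclic ↥(Subgroup.closure {(QuotientGroup.mk x : Kˣ ⧸ T), QuotientGroup.mk y}) →
        (QuotientAddGroup.mk (modT T x ⊗ₜ[ℤ] modT T y)
          : (ModT K T ⊗[ℤ] ModT K T) ⧸ steinbergRel K T) ≠ 0 := by
  haveI : Fact ℓ.Prime := Fact.mk hℓ
  have hsmul : ∀ v : ModT K T, ℓ • v = 0 := by
    intro v
    obtain ⟨u, hu⟩ := QuotientGroup.mk_surjective (Additive.toMul v)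
    have hv : v = Additive.ofMul (QuotientGroup.mk u) := by rw [hu]; rfl
    have h1 : (QuotientGroup.mk u : Kˣ ⧸ T) ^ ℓ = 1 :=
      (QuotientGroup.eq_one_iff _).mpr (hpow u)
    rw [hv, ← ofMul_pow, h1]
    rfl
  constructor
  · -- rigid → tensor classes nonzero
    intro hrig x y hnc
    have hindep : ∀ m : ℤ, m • modT T x ≠ modT T y ∧ m • modT T y ≠ modT T x := by
      intro m
      constructor
      · intro hEq
        apply hnc
        apply aux_cyclic_of_mem_zpowers
        refine ⟨m, ?_⟩
        simp only [modT] at hEq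
        rw [← ofMul_zpow] at hEq
        exact Additive.ofMul.injective hEq
      · intro hEq
        rw [Set.pair_comm] at hnc
        apply hnc
        apply aux_cyclic_of_mem_zpowers
        refine ⟨m, ?_⟩
        simp only [modT] at hEq
        rw [← ofMul_zpow] at hEq
        exact Additive.ofMul.injective hEq
    obtain ⟨φ, ψ, hφx, hφy, hψx, hψy⟩ :=
      aux_functionals hℓ hsmul (modT T x) (modT T y) hindep
    set B : ModT K T →ₗ[ℤ] ModT K T →ₗ[ℤ] ZMod ℓ :=
      LinearMap.mk₂ ℤ (fun u w => φ u * ψ w - ψ u * φ w)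
        (fun m₁ m₂ n => by simp only [map_add]; ring)
        (fun c m n => by simp only [map_zsmul, zsmul_eq_mul]; ring)
        (fun m n₁ n₂ => by simp only [map_add]; ring)
        (fun c m n => by simp only [map_zsmul, zsmul_eq_mul]; ring) with hB
    have hBapp : ∀ u w, B u w = φ u * ψ w - ψ u * φ w := fun u w => rfl
    set L : (ModT K T ⊗[ℤ] ModT K T) →ₗ[ℤ] ZMod ℓ := TensorProduct.lift B with hL
    have hker : steinbergRel K T ≤ L.toAddMonoidHom.ker := by
      rw [steinbergRel, AddSubgroup.closure_le]
      rintro z ⟨a, b, ⟨s, hs, t, ht, heq⟩, rfl⟩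
      rw [SetLike.mem_coe, AddMonoidHom.mem_ker, LinearMap.toAddMonoidHom_coe]
      by_cases ha : a ∈ T
      · have h0 : modT T a = 0 := by
          rw [modT, (QuotientGroup.eq_one_iff _).mpr ha]; rfl
        rw [h0, TensorProduct.zero_tmul, map_zero]
      · -- use rigidity
        have ha' : a * s ∉ T := fun hm => ha (by
          have := T.mul_mem hm (T.inv_mem hs)
          simpa [mul_assoc] using this)
        have hval : (1 : K) - ((a * s : Kˣ) : K) = ((b * t : Kˣ) : K) := by
          simp only [Units.val_mul]
          linear_combination -heq
        have hne0 : (1 : K) - ((a * s : Kˣ) : K) ≠ 0 := by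
          rw [hval]; exact Units.ne_zero _
        have hcyc := hrig (a * s) ha' hne0
        have e2 : Units.mk0 ((1 : K) - ((a * s : Kˣ) : K)) hne0 = b * t :=
          Units.ext (by rw [Units.val_mk0, hval])
        have e1 : (QuotientGroup.mk (a * s) : Kˣ ⧸ T) = QuotientGroup.mk a := by
          refine QuotientGroup.eq.mpr ?_
          have h5 : (a * s)⁻¹ * a = s⁻¹ := by group
          rw [h5]; exact T.inv_mem hs
        have e3 : (QuotientGroup.mk (b * t) : Kˣ ⧸ T) = QuotientGroup.mk b := by
          refine QuotientGroup.eq.mpr ?_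
          have h5 : (b * t)⁻¹ * b = t⁻¹ := by group
          rw [h5]; exact T.inv_mem ht
        rw [e2, e1, e3] at hcyc
        obtain ⟨g, ⟨m, hm⟩, ⟨n, hn⟩⟩ := aux_exists_zpow hcyc
        have hma : modT T a = Additive.ofMul (g ^ m) := by
          simp only [modT]; rw [hm]
        have hmb : modT T b = Additive.ofMul (g ^ n) := by
          simp only [modT]; rw [hn]
        have hφa : φ (modT T a) = m • φ (Additive.ofMul g) := by
          rw [hma]
          exact (congrArg φ (ofMul_zpow m g)).trans (AddMonoidHom.map_zsmul φ m _)
        have hφb : φ (modT T b) = n • φ (Additive.ofMul g) := by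
          rw [hmb]
          exact (congrArg φ (ofMul_zpow n g)).trans (AddMonoidHom.map_zsmul φ n _)
        have hψa : ψ (modT T a) = m • ψ (Additive.ofMul g) := by
          rw [hma]
          exact (congrArg ψ (ofMul_zpow m g)).trans (AddMonoidHom.map_zsmul ψ m _)
        have hψb : ψ (modT T b) = n • ψ (Additive.ofMul g) := by
          rw [hmb]
          exact (congrArg ψ (ofMul_zpow n g)).trans (AddMonoidHom.map_zsmul ψ n _)
        rw [hL]; erw [TensorProduct.lift.tmul]; rw [hBapp, hφa, hφb, hψa, hψb]
        simp only [zsmul_eq_mul]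
        ring
    intro hzero
    rw [QuotientAddGroup.eq_zero_iff] at hzero
    have h0 : L (modT T x ⊗ₜ[ℤ] modT T y) = 0 := hker hzero
    rw [hL] at h0; erw [TensorProduct.lift.tmul] at h0; rw [hBapp, hφx, hφy, hψx, hψy] at h0
    simp at h0
  · -- converse
    intro hQ x hxT h
    by_contra hnc
    refine hQ x (Units.mk0 ((1 : K) - (x : K)) h) hnc ?_
    rw [QuotientAddGroup.eq_zero_iff]
    apply AddSubgroup.subset_closure
    refine ⟨x, Units.mk0 ((1 : K) - (x : K)) h, ⟨1, T.one_mem, 1, T.one_mem, ?_⟩, rfl⟩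
    simp
end

section
/- Let ℓ be a prime, K a field with char K ≠ ℓ, L a field extension of K, w a valuation on L and v its restriction to K, with m_v = {a ∈ K : w(a) < 1} the maximal ideal of the valuation ring of v. Fix n ≥ 1 and assume that every element of 1+m_v admits an ℓⁿ-th root in L. Then the convex subgroup of Γ_v generated by v(ℓ) is contained in ℓⁿ·Γ_w; concretely, for every x ∈ K^× such that w(ℓ)^m ≤ w(x) ≤ w(ℓ)^{−m} for some natural number m, there exists y ∈ L^× with w(x) = w(y)^{ℓⁿ}. -/
/-- Valuations are at most 1 on natural numbers. -/
lemma stmt8_nat_le_one {L Γ : Type*} [Field L] [LinearOrderedCommGroupWithZero Γ]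
    (w : Valuation L Γ) (k : ℕ) : w (k : L) ≤ 1 := by
  induction k with
  | zero => simp
  | succ k ih =>
    push_cast
    exact le_trans (w.map_add _ _) (max_le ih (le_of_eq w.map_one))

/-- let `K` be a field with `char K ≠ ℓ`, `L/K` a field extension, `w` a
(multiplicative) valuation on `L` and `v` its restriction to `K`.  If every element of
`1 + m_v` has an `ℓⁿ`-th root in `L`, then the convex subgroup of `Γ_v` generated by
`v(ℓ)` is contained in `ℓⁿ·Γ_w`: for every `x ∈ K^×` with
`w(ℓ)^m ≤ w(x) ≤ w(ℓ)^{-m}` for some `m : ℕ`, there is `y ∈ L^×` with `w(x) = w(y)^{ℓⁿ}`. -/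
theorem stmt_8 {K L : Type*} [Field K] [Field L] [Algebra K L]
    {Γ : Type*} [LinearOrderedCommGroupWithZero Γ]
    (ℓ n : ℕ) (hℓ : ℓ.Prime) (hchar : ringChar K ≠ ℓ) (hn : 1 ≤ n)
    (w : Valuation L Γ)
    (hroot : ∀ a : K, w (algebraMap K L a) < 1 →
      ∃ y : L, y ^ ℓ ^ n = 1 + algebraMap K L a) :
    ∀ x : K, x ≠ 0 →
      (∃ m : ℕ, w (algebraMap K L (ℓ : K)) ^ m ≤ w (algebraMap K L x) ∧
        w (algebraMap K L x) ≤ (w (algebraMap K L (ℓ : K)))⁻¹ ^ m) →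
      ∃ y : L, y ≠ 0 ∧ w (algebraMap K L x) = w y ^ ℓ ^ n := by
  set A := algebraMap K L with hA
  set q := ℓ ^ n with hq
  have hq2 : 2 ≤ q := le_trans hℓ.two_le (Nat.le_self_pow (by omega) ℓ)
  obtain ⟨Q, hQ⟩ : ∃ Q, q = Q + 1 := ⟨q - 1, by omega⟩
  have hQ1 : 1 ≤ Q := by omega
  have hℓK : (ℓ : K) ≠ 0 := by
    intro h
    rcases hℓ.eq_one_or_self_of_dvd _ (ringChar.dvd h) with h1 | h1
    · exact absurd h1 CharP.ringChar_ne_one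
    · exact hchar h1
  have hAinj : ∀ z : K, z ≠ 0 → w (A z) ≠ 0 := by
    intro z hz
    rw [Valuation.ne_zero_iff]
    exact fun h => hz (map_eq_zero_iff A (algebraMap K L).injective |>.mp (hA ▸ h))
  have hwℓ0 : w (A (ℓ : K)) ≠ 0 := hAinj _ hℓK
  have hwℓ1 : w (A (ℓ : K)) ≤ 1 := by
    rw [hA, map_natCast]; exact stmt8_nat_le_one w ℓ
  -- main claim
  have claim : ∀ a : K, a ≠ 0 → w (A a) < 1 → w (A (ℓ : K)) ^ q < w (A a) ^ Q →
      ∃ b : L, b ≠ 0 ∧ w (A a) = w b ^ q := by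
    intro a ha hlt hbig
    obtain ⟨y, hy⟩ := hroot a hlt
    have hwy : w y = 1 := by
      have h1 : w y ^ q = 1 := by
        rw [← map_pow, hy, w.map_one_add_of_lt hlt]
      rcases lt_trichotomy (w y) 1 with h | h | h
      · exact absurd h1 (ne_of_lt (pow_lt_one' h (by omega)))
      · exact h
      · exact absurd h1 (ne_of_gt (one_lt_pow' h (by omega)))
    set b := y - 1 with hb
    have hwb1 : w b ≤ 1 := le_trans (w.map_sub y 1) (by simp [hwy])
    set S := ∑ k ∈ Finset.range Q, b ^ (k + 1) * ((q.choose (k + 1) : ℕ) : L) with hS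
    have key : A a = b ^ q + S := by
      have hyb : y = b + 1 := by rw [hb]; ring
      have expand : y ^ q = ∑ k ∈ Finset.range (q + 1), b ^ k * ((q.choose k : ℕ) : L) := by
        rw [hyb, add_pow]
        simp
      have : A a = y ^ q - 1 := by rw [hy]; ring
      rw [this, expand, hQ]
      rw [Finset.sum_range_succ']
      simp only [pow_zero, Nat.choose_zero_right, Nat.cast_one, one_mul]
      rw [Finset.sum_range_succ]
      have : Q + 1 = q := hQ.symm
      rw [this]
      simp only [Nat.choose_self, Nat.cast_one, mul_one]
      rw [hS]
      ring
    have hSle : w S ≤ w (A (ℓ : K)) * w b := by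
      apply w.map_sum_le
      intro k hk
      have hk1 : k + 1 ≠ 0 := by omega
      have hk2 : k + 1 ≠ q := by
        simp only [Finset.mem_range] at hk; omega
      obtain ⟨d, hd⟩ := Nat.Prime.dvd_choose_pow hℓ hk1 (hq ▸ hk2)
      have hcast : ((q.choose (k + 1) : ℕ) : L) = A (ℓ : K) * (d : L) := by
        rw [hd]; push_cast [hA, map_natCast]; ring
      rw [w.map_mul, hcast, w.map_mul, map_pow]
      calc w b ^ (k + 1) * (w (A (ℓ : K)) * w ((d : ℕ) : L))
          ≤ w b ^ (k + 1) * (w (A (ℓ : K)) * 1) :=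
            mul_le_mul_right (mul_le_mul_right (stmt8_nat_le_one w d) _) _
        _ = w b ^ (k + 1) * w (A (ℓ : K)) := by rw [mul_one]
        _ ≤ w b * w (A (ℓ : K)) := by
            apply mul_le_mul_left
            calc w b ^ (k + 1) = w b ^ k * w b := by rw [pow_succ]
              _ ≤ 1 * w b := mul_le_mul_left (pow_le_one' hwb1 k) _
              _ = w b := one_mul _
        _ = w (A (ℓ : K)) * w b := mul_comm _ _
    rcases lt_or_ge (w (A (ℓ : K))) (w b ^ Q) with h1 | h2
    · -- dominant case
      have hb0 : w b ≠ 0 := by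
        intro h
        rw [h, zero_pow (by omega : Q ≠ 0)] at h1
        exact absurd h1 (by simp)
      have hlt2 : w S < w (b ^ q) := by
        apply lt_of_le_of_lt hSle
        rw [map_pow, hQ, pow_succ]
        exact (mul_lt_mul_iff_left₀ (zero_lt_iff.mpr hb0)).mpr h1
      refine ⟨b, by rwa [Valuation.ne_zero_iff] at hb0, ?_⟩
      rw [key, w.map_add_eq_of_lt_left hlt2, map_pow]
    · -- contradiction case
      exfalso
      have hA2 : w (A a) ≤ max (w (b ^ q)) (w S) := by
        rw [key]; exact w.map_add _ _
      have hfinal : w (A a) ^ Q ≤ w (A (ℓ : K)) ^ q := by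
        rcases le_max_iff.mp hA2 with h | h
        · calc w (A a) ^ Q ≤ (w (b ^ q)) ^ Q := pow_le_pow_left' h Q
            _ = (w b ^ Q) ^ q := by rw [map_pow, ← pow_mul, ← pow_mul, Nat.mul_comm]
            _ ≤ w (A (ℓ : K)) ^ q := pow_le_pow_left' h2 q
        · calc w (A a) ^ Q ≤ (w (A (ℓ : K)) * w b) ^ Q :=
              pow_le_pow_left' (le_trans h hSle) Q
            _ = w (A (ℓ : K)) ^ Q * w b ^ Q := mul_pow _ _ _
            _ ≤ w (A (ℓ : K)) ^ Q * w (A (ℓ : K)) := mul_le_mul_right h2 _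
            _ = w (A (ℓ : K)) ^ q := by rw [← pow_succ, hQ]
      exact absurd hbig (not_lt.mpr hfinal)
  -- ℓ itself is a q-th power in the value group
  have hℓpow : ∃ c : L, c ≠ 0 ∧ w (A (ℓ : K)) = w c ^ q := by
    rcases eq_or_lt_of_le hwℓ1 with h | h
    · exact ⟨1, one_ne_zero, by rw [h, w.map_one, one_pow]⟩
    · apply claim (ℓ : K) hℓK h
      calc w (A (ℓ : K)) ^ q = w (A (ℓ : K)) ^ Q * w (A (ℓ : K)) := by rw [← pow_succ, hQ]
        _ < w (A (ℓ : K)) ^ Q * 1 :=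
            (mul_lt_mul_iff_right₀ (zero_lt_iff.mpr (pow_ne_zero Q hwℓ0))).mpr h
        _ = w (A (ℓ : K)) ^ Q := mul_one _
  -- auxiliary induction
  have aux : ∀ m : ℕ, ∀ x : K, x ≠ 0 → w (A (ℓ : K)) ^ m ≤ w (A x) → w (A x) < 1 →
      ∃ y : L, y ≠ 0 ∧ w (A x) = w y ^ q := by
    intro m
    induction m with
    | zero =>
      intro x hx h1 h2
      rw [pow_zero] at h1
      exact absurd (lt_of_le_of_lt h1 h2) (lt_irrefl 1)
    | succ m ih =>
      intro x hx hge hlt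
      have hwx0 : w (A x) ≠ 0 := hAinj x hx
      rcases lt_or_ge (w (A (ℓ : K))) (w (A x)) with h | h
      · -- apply claim directly
        apply claim x hx hlt
        have hℓlt1 : w (A (ℓ : K)) < 1 := lt_trans h hlt
        calc w (A (ℓ : K)) ^ q = w (A (ℓ : K)) * w (A (ℓ : K)) ^ Q := by
              rw [← pow_succ', hQ]
          _ ≤ w (A (ℓ : K)) * w (A x) ^ Q :=
              mul_le_mul_right (pow_le_pow_left' (le_of_lt h) Q) _
          _ < 1 * w (A x) ^ Q :=
              (mul_lt_mul_iff_left₀ (zero_lt_iff.mpr (pow_ne_zero Q hwx0))).mpr hℓlt1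
          _ = w (A x) ^ Q := one_mul _
      · -- divide by ℓ and recurse
        obtain ⟨c, hc0, hc⟩ := hℓpow
        set x' := x * (ℓ : K)⁻¹ with hx'def
        have hx'0 : x' ≠ 0 := mul_ne_zero hx (inv_ne_zero hℓK)
        have hwx' : w (A x') = w (A x) * (w (A (ℓ : K)))⁻¹ := by
          rw [hx'def, map_mul, w.map_mul, map_inv₀, map_inv₀]
        have hx'ge : w (A (ℓ : K)) ^ m ≤ w (A x') := by
          rw [hwx']
          calc w (A (ℓ : K)) ^ m
              = w (A (ℓ : K)) ^ (m + 1) * (w (A (ℓ : K)))⁻¹ := by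
                rw [pow_succ, mul_assoc, mul_inv_cancel₀ hwℓ0, mul_one]
            _ ≤ w (A x) * (w (A (ℓ : K)))⁻¹ := mul_le_mul_left hge _
        have hx'le : w (A x') ≤ 1 := by
          rw [hwx']
          calc w (A x) * (w (A (ℓ : K)))⁻¹
              ≤ w (A (ℓ : K)) * (w (A (ℓ : K)))⁻¹ := mul_le_mul_left h _
            _ = 1 := mul_inv_cancel₀ hwℓ0
        have hrec : w (A x) = w (A x') * w (A (ℓ : K)) := by
          rw [hwx', mul_assoc, inv_mul_cancel₀ hwℓ0, mul_one]
        rcases eq_or_lt_of_le hx'le with heq | hlt'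
        · exact ⟨c, hc0, by rw [hrec, heq, one_mul, hc]⟩
        · obtain ⟨y', hy'0, hy'⟩ := ih x' hx'0 hx'ge hlt'
          refine ⟨y' * c, mul_ne_zero hy'0 hc0, ?_⟩
          rw [hrec, hy', hc, w.map_mul, mul_pow]
  -- conclude
  intro x hx ⟨m, hlo, hhi⟩
  have hwx0 : w (A x) ≠ 0 := hAinj x hx
  rcases lt_trichotomy (w (A x)) 1 with h | h | h
  · exact aux m x hx hlo h
  · exact ⟨1, one_ne_zero, by rw [h, w.map_one, one_pow]⟩
  · have hxi : x⁻¹ ≠ 0 := inv_ne_zero hx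
    have hwxi : w (A x⁻¹) = (w (A x))⁻¹ := by rw [map_inv₀, map_inv₀]
    have h1 : w (A (ℓ : K)) ^ m ≤ w (A x⁻¹) := by
      rw [hwxi]
      apply le_inv_of_le_inv₀ (zero_lt_iff.mpr hwx0)
      rwa [inv_pow] at hhi
    have h2 : w (A x⁻¹) < 1 := by
      rw [hwxi]; exact inv_lt_one_of_one_lt₀ h
    obtain ⟨y, hy0, hy⟩ := aux m x⁻¹ hxi h1 h2
    refine ⟨y⁻¹, inv_ne_zero hy0, ?_⟩
    rw [map_inv₀, inv_pow, ← hy, hwxi, inv_inv]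
end
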